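/- arXiv:2412.01022 — 11 statements merged into one kernel-verified Lean document; each statement's English description precedes it below -/
import Mathlib

section
/- Let E ⊆ ℝⁿ (n ≥ 2) be an open set whose 1-nonsemiconvexity-point set E^◇ is nonempty, and let y ∈ E^◇. Then there exists d(y) > 0 such that for every unit vector α ∈ S^{n-1} there exists a point x_α(y) on the ray {tα + y : t ≥ 0} with x_α(y) ∈ E and the open ball U(x_α(y), d(y)) contained in E. (The radius d(y) depends only on y, not on α.) -/
open Set Metric

/-- The closed ray with endpoint `x` in direction `α`. -/
def ray {n : ℕ} (x α : EuclideanSpace ℝ (Fin n)) : Set (EuclideanSpace ℝ (Fin n)) :=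
  {z | ∃ t : ℝ, 0 ≤ t ∧ z = x + t • α}

/-- The straight line through `x` in direction `α`. -/
def line {n : ℕ} (x α : EuclideanSpace ℝ (Fin n)) : Set (EuclideanSpace ℝ (Fin n)) :=
  {z | ∃ t : ℝ, z = x + t • α}

/-- The set `E^◇` of 1-nonsemiconvexity points of `E`. -/
def diamond {n : ℕ} (E : Set (EuclideanSpace ℝ (Fin n))) : Set (EuclideanSpace ℝ (Fin n)) :=
  {x | x ∉ E ∧ ∀ α : EuclideanSpace ℝ (Fin n), ‖α‖ = 1 → (ray x α ∩ E).Nonempty}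

/-- The set `E^△` of 1-nonconvexity points of `E`. -/
def triangle {n : ℕ} (E : Set (EuclideanSpace ℝ (Fin n))) : Set (EuclideanSpace ℝ (Fin n)) :=
  {x | x ∉ E ∧ ∀ α : EuclideanSpace ℝ (Fin n), ‖α‖ = 1 → (line x α ∩ E).Nonempty}

/-- An (open) set is weakly 1-semiconvex if through every boundary point
there passes a closed ray missing the set. -/
def WeaklySemiconvex {n : ℕ} (E : Set (EuclideanSpace ℝ (Fin n))) : Prop :=
  ∀ x ∈ frontier E, ∃ α : EuclideanSpace ℝ (Fin n), ‖α‖ = 1 ∧ ray x α ∩ E = ∅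

/-- An (open) set is weakly 1-convex if through every boundary point
there passes a straight line missing the set. -/
def WeaklyConvex {n : ℕ} (E : Set (EuclideanSpace ℝ (Fin n))) : Prop :=
  ∀ x ∈ frontier E, ∃ α : EuclideanSpace ℝ (Fin n), ‖α‖ = 1 ∧ line x α ∩ E = ∅

theorem diamond_uniform_ball {n : ℕ} (hn : 2 ≤ n) (E : Set (EuclideanSpace ℝ (Fin n)))
    (hE : IsOpen E) (hne : (diamond E).Nonempty)
    (y : EuclideanSpace ℝ (Fin n)) (hy : y ∈ diamond E) :
    ∃ d : ℝ, 0 < d ∧ ∀ α : EuclideanSpace ℝ (Fin n), ‖α‖ = 1 →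
      ∃ x : EuclideanSpace ℝ (Fin n), x ∈ ray y α ∧ x ∈ E ∧ ball x d ⊆ E := by
  obtain ⟨hyE, hray⟩ := hy
  -- local version with a neighborhood in the sphere
  have key : ∀ α : EuclideanSpace ℝ (Fin n),
      ∃ d > (0:ℝ), ∃ ε > (0:ℝ), ∀ β : EuclideanSpace ℝ (Fin n), ‖β‖ = 1 → ‖β - α‖ < ε →
        ∃ x, x ∈ ray y β ∧ x ∈ E ∧ ball x d ⊆ E := by
    intro α
    by_cases hα : ‖α‖ = 1
    · obtain ⟨x, ⟨t, ht, hx⟩, hxE⟩ := hray α hα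
      obtain ⟨r, hr, hball⟩ := Metric.isOpen_iff.mp hE x hxE
      refine ⟨r/2, by positivity, r/(2*(t+1)), by positivity, ?_⟩
      intro β hβ hβα
      have hdist : ‖(y + t • β) - x‖ < r/2 := by
        have h1 : (y + t • β) - x = t • (β - α) := by
          rw [hx]; module
        rw [h1, norm_smul, Real.norm_eq_abs, abs_of_nonneg ht]
        calc t * ‖β - α‖ < t * (r/(2*(t+1))) + r/(2*(t+1)) := by
              nlinarith [norm_nonneg (β - α)]
          _ = (t+1) * (r/(2*(t+1))) := by ring
          _ = r/2 := by field_simp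
      refine ⟨y + t • β, ⟨t, ht, rfl⟩, ?_, ?_⟩
      · exact hball (by simpa [mem_ball, dist_eq_norm] using hdist.trans (by linarith))
      · intro z hz
        apply hball
        rw [mem_ball, dist_eq_norm] at hz ⊢
        calc ‖z - x‖ ≤ ‖z - (y + t • β)‖ + ‖(y + t • β) - x‖ := norm_sub_le_norm_sub_add_norm_sub _ _ _
          _ < r/2 + r/2 := by linarith
          _ = r := by ring
    · -- vacuous case: no unit β is within |‖α‖-1| of α
      refine ⟨1, one_pos, |‖α‖ - 1|, abs_pos.mpr (sub_ne_zero.mpr hα), ?_⟩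
      intro β hβ hβα
      exfalso
      have h1 : |‖α‖ - 1| = |‖α‖ - ‖β‖| := by rw [hβ]
      have h2 : |‖α‖ - ‖β‖| ≤ ‖α - β‖ := abs_norm_sub_norm_le α β
      rw [norm_sub_rev] at hβα
      linarith [h1 ▸ h2]
  choose d hd ε hε H using key
  set S := sphere (0 : EuclideanSpace ℝ (Fin n)) 1 with hS
  have hScomp : IsCompact S := isCompact_sphere 0 1
  have hScover : S ⊆ ⋃ α ∈ S, ball α (ε α) := fun α hα =>
    mem_biUnion hα (mem_ball_self (hε α))
  obtain ⟨T, hTS, hTfin, hcover⟩ :=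
    hScomp.elim_finite_subcover_image (fun α _ => isOpen_ball) hScover
  -- S is nonempty
  have hSne : S.Nonempty := by
    refine ⟨EuclideanSpace.single (⟨0, by omega⟩ : Fin n) (1:ℝ), ?_⟩
    simp [hS, EuclideanSpace.norm_single]
  -- hence T is nonempty
  obtain ⟨α₀, hα₀⟩ := hSne
  have := hcover hα₀
  simp only [mem_iUnion] at this
  obtain ⟨β₀, hβ₀T, _⟩ := this
  have hTne : hTfin.toFinset.Nonempty := ⟨β₀, hTfin.mem_toFinset.mpr hβ₀T⟩
  refine ⟨hTfin.toFinset.inf' hTne d, ?_, ?_⟩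
  · rw [Finset.lt_inf'_iff]
    exact fun β _ => hd β
  · intro α hα
    have hαS : α ∈ S := by simp [hS, hα]
    have := hcover hαS
    simp only [mem_iUnion] at this
    obtain ⟨β, hβT, hαβ⟩ := this
    rw [mem_ball, dist_eq_norm] at hαβ
    obtain ⟨x, hx1, hx2, hx3⟩ := H β α hα hαβ
    refine ⟨x, hx1, hx2, fun z hz => hx3 ?_⟩
    rw [mem_ball] at hz ⊢
    exact hz.trans_le (Finset.inf'_le d (hTfin.mem_toFinset.mpr hβT))
end

section
/- Let E ⊆ ℝⁿ (n ≥ 2) be an open set whose 1-nonconvexity-point set E^△ is nonempty, and let y ∈ E^△. Then there exists d(y) > 0 such that for every unit vector α ∈ S^{n-1} there exists a point x_α(y) on the straight line {tα + y : t ∈ ℝ} with x_α(y) ∈ E and the open ball U(x_α(y), d(y)) contained in E. -/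
open Set Metric

theorem triangle_uniform_ball {n : ℕ} (hn : 2 ≤ n) (E : Set (EuclideanSpace ℝ (Fin n)))
    (hE : IsOpen E) (hne : (triangle E).Nonempty)
    (y : EuclideanSpace ℝ (Fin n)) (hy : y ∈ triangle E) :
    ∃ d : ℝ, 0 < d ∧ ∀ α : EuclideanSpace ℝ (Fin n), ‖α‖ = 1 →
      ∃ x : EuclideanSpace ℝ (Fin n), x ∈ line y α ∧ x ∈ E ∧ ball x d ⊆ E := by
  obtain ⟨-, hy2⟩ := hy
  set V : ℕ → Set (EuclideanSpace ℝ (Fin n)) := fun k =>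
    {α | ∃ x, x ∈ line y α ∧ x ∈ E ∧ ball x (1/((k:ℝ)+1)) ⊆ E} with hV
  have hcov : sphere (0 : EuclideanSpace ℝ (Fin n)) 1 ⊆ ⋃ k : ℕ, interior (V k) := by
    intro α hα
    have hα1 : ‖α‖ = 1 := by simpa using mem_sphere_zero_iff_norm.mp hα
    obtain ⟨x, ⟨t, hxt⟩, hxE⟩ := hy2 α hα1
    obtain ⟨r, hr, hball⟩ := Metric.isOpen_iff.mp hE x hxE
    obtain ⟨k, hk⟩ := exists_nat_one_div_lt (show (0:ℝ) < r/2 by positivity)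
    refine mem_iUnion.mpr ⟨k, ?_⟩
    rw [mem_interior_iff_mem_nhds]
    have hδ : (0:ℝ) < (r/2)/(|t|+1) := by positivity
    refine Filter.mem_of_superset (Metric.ball_mem_nhds α hδ) ?_
    intro α' hα'
    have hdist : dist (y + t • α') x = |t| * dist α' α := by
      rw [hxt, dist_eq_norm, dist_eq_norm]
      have : y + t • α' - (y + t • α) = t • (α' - α) := by
        simp [smul_sub]
      rw [this, norm_smul, Real.norm_eq_abs]
    have hclose : dist (y + t • α') x < r/2 := by
      rw [hdist]
      have h1 : dist α' α < (r/2)/(|t|+1) := Metric.mem_ball.mp hα'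
      have h2 : (0:ℝ) ≤ |t| := abs_nonneg t
      have h3 : (0:ℝ) ≤ dist α' α := dist_nonneg
      have h4 : dist α' α * (|t|+1) < r/2 := (lt_div_iff₀ (by positivity)).mp h1
      nlinarith
    refine ⟨y + t • α', ⟨t, rfl⟩, hball (by simp [Metric.mem_ball]; linarith), ?_⟩
    intro z hz
    apply hball
    have := Metric.mem_ball.mp hz
    have : dist z x ≤ dist z (y + t • α') + dist (y + t • α') x := dist_triangle _ _ _
    rw [Metric.mem_ball]
    have hz' := Metric.mem_ball.mp hz
    linarith
  obtain ⟨s, hs⟩ := (isCompact_sphere (0 : EuclideanSpace ℝ (Fin n)) 1).elim_finite_subcover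
    (fun k => interior (V k)) (fun k => isOpen_interior) hcov
  set K : ℕ := s.sup id with hK
  refine ⟨1/((K:ℝ)+1), by positivity, ?_⟩
  intro α hα1
  have hαs : α ∈ sphere (0 : EuclideanSpace ℝ (Fin n)) 1 := by
    simpa [mem_sphere_zero_iff_norm] using hα1
  obtain ⟨k, hks, hαk⟩ := mem_iUnion₂.mp (hs hαs)
  obtain ⟨x, hxl, hxE, hxb⟩ := interior_subset hαk
  refine ⟨x, hxl, hxE, fun z hz => hxb ?_⟩
  have hkK : (k:ℝ) ≤ K := Nat.cast_le.mpr (Finset.le_sup (f := id) hks)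
  have : (1:ℝ)/((K:ℝ)+1) ≤ 1/((k:ℝ)+1) := by
    apply one_div_le_one_div_of_le <;> linarith
  exact Metric.mem_ball.mpr (lt_of_lt_of_le (Metric.mem_ball.mp hz) this)
end

section
/- Let E ⊆ ℝⁿ (n ≥ 2) be an open weakly 1-semiconvex set whose 1-nonsemiconvexity-point set E^◇ is nonempty. Then E^◇ is open. -/
open Set Metric

theorem diamond_isOpen {n : ℕ} (hn : 2 ≤ n) (E : Set (EuclideanSpace ℝ (Fin n)))
    (hE : IsOpen E) (hws : WeaklySemiconvex E) (hne : (diamond E).Nonempty) :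
    IsOpen (diamond E) := by
  rw [Metric.isOpen_iff]
  rintro x ⟨hxE, hx2⟩
  -- x is not in the closure of E
  have hxcl : x ∉ closure E := by
    intro hcl
    have hfr : x ∈ frontier E := by
      rw [frontier, hE.interior_eq]
      exact ⟨hcl, hxE⟩
    obtain ⟨α, hα, hαE⟩ := hws x hfr
    obtain ⟨z, hz⟩ := hx2 α hα
    rw [hαE] at hz
    exact hz
  obtain ⟨ε₀, hε₀, hball₀⟩ := Metric.isOpen_iff.mp (isClosed_closure.isOpen_compl)
    x hxcl
  -- key: for each direction, a quantitative statement stable under perturbation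
  have key : ∀ α : EuclideanSpace ℝ (Fin n), ‖α‖ = 1 →
      ∃ t : ℝ, 0 ≤ t ∧ ∃ ε : ℝ, 0 < ε ∧
        ∀ y β : EuclideanSpace ℝ (Fin n), ‖y - x‖ < ε → ‖β - α‖ < ε →
          y + t • β ∈ E := by
    intro α hα
    obtain ⟨z, ⟨t, ht, rfl⟩, hzE⟩ := hx2 α hα
    obtain ⟨r, hr, hballr⟩ := Metric.isOpen_iff.mp hE _ hzE
    refine ⟨t, ht, r / (2 * (t + 1)), by positivity, ?_⟩
    intro y β hy hβ
    apply hballr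
    rw [mem_ball, dist_eq_norm]
    have heq : y + t • β - (x + t • α) = (y - x) + t • (β - α) := by
      rw [smul_sub]; abel
    rw [heq]
    have h1 : ‖(y - x) + t • (β - α)‖ ≤ ‖y - x‖ + t * ‖β - α‖ := by
      calc ‖(y - x) + t • (β - α)‖ ≤ ‖y - x‖ + ‖t • (β - α)‖ := norm_add_le _ _
        _ = ‖y - x‖ + t * ‖β - α‖ := by rw [norm_smul, Real.norm_eq_abs, abs_of_nonneg ht]
    have h2 : t * ‖β - α‖ ≤ t * (r / (2 * (t + 1))) :=
      mul_le_mul_of_nonneg_left hβ.le ht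
    have hnn : (0:ℝ) ≤ ‖β - α‖ := norm_nonneg _
    have hd : r / (2 * (t + 1)) * (2 * (t + 1)) = r :=
      div_mul_cancel₀ _ (by positivity)
    have hepos : 0 < r / (2 * (t + 1)) := by positivity
    nlinarith [norm_nonneg (y - x)]
  choose t ht ε hε hkey using key
  -- compactness of the sphere
  have hScompact : IsCompact (sphere (0 : EuclideanSpace ℝ (Fin n)) 1) :=
    isCompact_sphere 0 1
  set ι := {α : EuclideanSpace ℝ (Fin n) // ‖α‖ = 1}
  have hcover : sphere (0 : EuclideanSpace ℝ (Fin n)) 1 ⊆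
      ⋃ p : ι, ball p.1 (ε p.1 p.2) := by
    intro β hβ
    have hβ1 : ‖β‖ = 1 := by rwa [mem_sphere_zero_iff_norm] at hβ
    exact mem_iUnion.mpr ⟨⟨β, hβ1⟩, mem_ball_self (hε β hβ1)⟩
  obtain ⟨T, hT⟩ := hScompact.elim_finite_subcover
    (fun p : ι => ball p.1 (ε p.1 p.2)) (fun p => isOpen_ball) hcover
  -- the sphere is nonempty, hence T is nonempty
  have hn0 : 0 < n := lt_of_lt_of_le (by norm_num) hn
  have hαex : ∃ α : EuclideanSpace ℝ (Fin n), ‖α‖ = 1 := by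
    refine ⟨EuclideanSpace.single ⟨0, hn0⟩ (1:ℝ), ?_⟩
    rw [EuclideanSpace.norm_single]; norm_num
  obtain ⟨α₀, hα₀⟩ := hαex
  have hTne : T.Nonempty := by
    by_contra hTe
    rw [Finset.not_nonempty_iff_eq_empty] at hTe
    subst hTe
    have := hT (by rwa [mem_sphere_zero_iff_norm] : α₀ ∈ sphere (0 : EuclideanSpace ℝ (Fin n)) 1)
    simpa using this
  set δ := min ε₀ (T.inf' hTne (fun p => ε p.1 p.2)) with hδdef
  have hδpos : 0 < δ := by
    apply lt_min hε₀
    rw [Finset.lt_inf'_iff]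
    exact fun p _ => hε p.1 p.2
  refine ⟨δ, hδpos, ?_⟩
  intro y hy
  rw [mem_ball, dist_eq_norm] at hy
  constructor
  · -- y ∉ E
    have : y ∈ (closure E)ᶜ := by
      apply hball₀
      rw [mem_ball, dist_eq_norm]
      exact lt_of_lt_of_le hy (min_le_left _ _)
    exact fun hyE => this (subset_closure hyE)
  · intro β hβ
    have hβS : β ∈ sphere (0 : EuclideanSpace ℝ (Fin n)) 1 := by
      rwa [mem_sphere_zero_iff_norm]
    obtain ⟨p, hpT, hpβ⟩ := by
      have := hT hβS
      simpa [mem_iUnion] using this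
    have hδp : δ ≤ ε p.1 p.2 :=
      le_trans (min_le_right _ _) (Finset.inf'_le _ hpT)
    have hmem : y + t p.1 p.2 • β ∈ E := by
      apply hkey p.1 p.2 y β (lt_of_lt_of_le hy hδp)
      rw [dist_eq_norm] at hpβ
      exact hpβ
    exact ⟨y + t p.1 p.2 • β, ⟨t p.1 p.2, ht p.1 p.2, rfl⟩, hmem⟩
end

section
/- Let E ⊆ ℝⁿ (n ≥ 2) be an open weakly 1-semiconvex set whose 1-nonsemiconvexity-point set E^◇ is nonempty. Then E^◇ is itself weakly 1-semiconvex, i.e., through every boundary point of E^◇ there passes a closed ray not intersecting E^◇. -/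
open Set Metric

lemma diamond_interior {n : ℕ} (hn : 1 ≤ n) (E : Set (EuclideanSpace ℝ (Fin n))) (hE : IsOpen E)
    (x : EuclideanSpace ℝ (Fin n)) (hx : x ∈ diamond E) (hxc : x ∉ closure E) :
    x ∈ interior (diamond E) := by
  have key : ∀ α : sphere (0 : EuclideanSpace ℝ (Fin n)) 1, ∃ t : ℝ, 0 ≤ t ∧ ∃ ε : ℝ, 0 < ε ∧
      ∀ x' α' : EuclideanSpace ℝ (Fin n), dist x' x < ε → dist α' (α : EuclideanSpace ℝ (Fin n)) < ε →
        x' + t • α' ∈ E := by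
    rintro ⟨α, hα⟩
    rw [mem_sphere_zero_iff_norm] at hα
    obtain ⟨z, ⟨t, ht, rfl⟩, hzE⟩ := hx.2 α hα
    obtain ⟨ε₀, hε₀, hball⟩ := Metric.isOpen_iff.1 hE _ hzE
    refine ⟨t, ht, ε₀ / (1 + t), by positivity, fun x' α' h1 h2 => ?_⟩
    apply hball
    have : x' + t • α' - (x + t • α) = (x' - x) + t • (α' - α) := by
      rw [smul_sub]; abel
    calc dist (x' + t • α') (x + t • α) = ‖(x' - x) + t • (α' - α)‖ := by
          rw [dist_eq_norm, this]
      _ ≤ ‖x' - x‖ + ‖t • (α' - α)‖ := norm_add_le _ _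
      _ = dist x' x + t * dist α' α := by
          rw [norm_smul, Real.norm_eq_abs, abs_of_nonneg ht, dist_eq_norm, dist_eq_norm]
      _ < ε₀ / (1 + t) + t * (ε₀ / (1 + t)) :=
          add_lt_add_of_lt_of_le h1 (mul_le_mul_of_nonneg_left h2.le ht)
      _ = ε₀ := by field_simp
  choose t ht ε hε h using key
  have hcompact : IsCompact (sphere (0 : EuclideanSpace ℝ (Fin n)) 1) := isCompact_sphere _ _
  have hcover : sphere (0 : EuclideanSpace ℝ (Fin n)) 1 ⊆
      ⋃ i : sphere (0 : EuclideanSpace ℝ (Fin n)) 1, ball (i : EuclideanSpace ℝ (Fin n)) (ε i) := by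
    intro a ha
    exact mem_iUnion.2 ⟨⟨a, ha⟩, mem_ball_self (hε ⟨a, ha⟩)⟩
  obtain ⟨s, hs⟩ := hcompact.elim_finite_subcover _ (fun i => isOpen_ball) hcover
  have hsne : s.Nonempty := by
    by_contra hs0
    rw [Finset.not_nonempty_iff_eq_empty] at hs0
    subst hs0
    have : (EuclideanSpace.single (⟨0, by omega⟩ : Fin n) (1:ℝ)) ∈
        sphere (0 : EuclideanSpace ℝ (Fin n)) 1 := by
      rw [mem_sphere_zero_iff_norm, EuclideanSpace.norm_single]; norm_num
    simpa using hs this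
  set δ := s.inf' hsne ε with hδ
  have hδpos : 0 < δ := by
    rw [hδ, Finset.lt_inf'_iff]
    exact fun i _ => hε i
  obtain ⟨r, hr, hr2⟩ := Metric.isOpen_iff.1 (isClosed_closure (s := E)).isOpen_compl x hxc
  refine mem_interior.2 ⟨ball x (min δ r), ?_, isOpen_ball, mem_ball_self (lt_min hδpos hr)⟩
  intro x' hx'
  rw [mem_ball] at hx'
  constructor
  · intro hmem
    exact hr2 (mem_ball.2 (lt_of_lt_of_le hx' (min_le_right _ _))) (subset_closure hmem)
  · intro α' hα'
    have hα's : α' ∈ sphere (0 : EuclideanSpace ℝ (Fin n)) 1 := mem_sphere_zero_iff_norm.2 hα'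
    obtain ⟨i, his, hib⟩ := mem_iUnion₂.1 (hs hα's)
    have h1 : dist x' x < ε i :=
      lt_of_lt_of_le hx' (le_trans (min_le_left _ _) (Finset.inf'_le _ his))
    exact ⟨x' + t i • α', ⟨t i, ht i, rfl⟩, h i x' α' h1 (mem_ball.1 hib)⟩

theorem diamond_weaklySemiconvex {n : ℕ} (hn : 2 ≤ n) (E : Set (EuclideanSpace ℝ (Fin n)))
    (hE : IsOpen E) (hws : WeaklySemiconvex E) (hne : (diamond E).Nonempty) :
    WeaklySemiconvex (diamond E) := by
  intro x hx
  -- `diamond E ⊆ Eᶜ`, which is closed, so frontier points are not in `E`.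
  have hdsub : diamond E ⊆ Eᶜ := fun y hy => hy.1
  have hclos : closure (diamond E) ⊆ Eᶜ := closure_minimal hdsub hE.isClosed_compl
  have hxE : x ∉ E := hclos (frontier_subset_closure hx)
  -- frontier points are not in `diamond E`
  have hxd : x ∉ diamond E := by
    intro hxdia
    by_cases hfr : x ∈ frontier E
    · obtain ⟨α, hα, hray⟩ := hws x hfr
      obtain ⟨z, hz⟩ := hxdia.2 α hα
      rw [hray] at hz
      exact hz
    · have hxc : x ∉ closure E := by
        intro hc
        exact hfr ⟨hc, by rwa [hE.interior_eq]⟩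
      exact hx.2 (diamond_interior (by omega) E hE x hxdia hxc)
  -- get a ray from `x` missing `E`
  have : ∃ α : EuclideanSpace ℝ (Fin n), ‖α‖ = 1 ∧ ray x α ∩ E = ∅ := by
    by_contra hcon
    push_neg at hcon
    refine hxd ⟨hxE, fun α hα => ?_⟩
    exact hcon α hα
  obtain ⟨α, hα, hray⟩ := this
  refine ⟨α, hα, ?_⟩
  ext z
  simp only [mem_inter_iff, mem_empty_iff_false, iff_false, not_and]
  rintro ⟨t, ht, rfl⟩ hzd
  obtain ⟨w, ⟨s, hs, rfl⟩, hwE⟩ := hzd.2 α hα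
  have : x + t • α + s • α ∈ ray x α := ⟨t + s, by positivity, by rw [add_smul]; abel⟩
  have : x + t • α + s • α ∈ ray x α ∩ E := ⟨this, hwE⟩
  rw [hray] at this
  exact this
end

section
/- Let E ⊆ ℝⁿ (n ≥ 2) be an open weakly 1-convex set whose 1-nonconvexity-point set E^△ is nonempty. Then E^△ is open. -/
open Set Metric

theorem triangle_isOpen {n : ℕ} (hn : 2 ≤ n) (E : Set (EuclideanSpace ℝ (Fin n)))
    (hE : IsOpen E) (hwc : WeaklyConvex E) (hne : (triangle E).Nonempty) :
    IsOpen (triangle E) := by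
  classical
  set B : Set (EuclideanSpace ℝ (Fin n)) :=
    {x | ∃ α : EuclideanSpace ℝ (Fin n), ‖α‖ = 1 ∧ line x α ∩ E = ∅} with hB
  have hBclosed : IsClosed B := by
    apply IsSeqClosed.isClosed
    intro u x hu hux
    choose α hα1 hα2 using hu
    obtain ⟨a, ha, φ, hφ, hαa⟩ :=
      (isCompact_sphere (0 : EuclideanSpace ℝ (Fin n)) 1).tendsto_subseq
        (fun k => (by simpa using hα1 k : α k ∈ sphere (0 : EuclideanSpace ℝ (Fin n)) 1))
    refine ⟨a, by simpa using ha, ?_⟩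
    ext z
    simp only [mem_inter_iff, mem_empty_iff_false, iff_false, not_and]
    rintro ⟨t, rfl⟩ hzE
    have htend : Filter.Tendsto (fun k => u (φ k) + t • α (φ k)) Filter.atTop
        (nhds (x + t • a)) :=
      (hux.comp hφ.tendsto_atTop).add (hαa.const_smul t)
    obtain ⟨k, hk⟩ := (htend.eventually_mem (hE.mem_nhds hzE)).exists
    have hmem : u (φ k) + t • α (φ k) ∈ line (u (φ k)) (α (φ k)) ∩ E := ⟨⟨t, rfl⟩, hk⟩
    rw [hα2 (φ k)] at hmem
    exact hmem
  have key : triangle E = (closure E)ᶜ ∩ Bᶜ := by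
    ext x
    constructor
    · rintro ⟨hxE, hx⟩
      have hxB : x ∉ B := by
        rintro ⟨α, hα, hαE⟩
        obtain ⟨z, hz1, hz2⟩ := hx α hα
        exact Set.eq_empty_iff_forall_notMem.mp hαE z ⟨hz1, hz2⟩
      refine ⟨fun hxc => ?_, hxB⟩
      have hfront : x ∈ frontier E := by
        rw [frontier, hE.interior_eq]
        exact ⟨hxc, hxE⟩
      obtain ⟨α, hα, hαE⟩ := hwc x hfront
      exact hxB ⟨α, hα, hαE⟩
    · rintro ⟨hxc, hxB⟩
      refine ⟨fun h => hxc (subset_closure h), fun α hα => ?_⟩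
      by_contra hcon
      exact hxB ⟨α, hα, by rwa [← not_nonempty_iff_eq_empty]⟩
  rw [key]
  exact isClosed_closure.isOpen_compl.inter hBclosed.isOpen_compl
end

section
/- Let E ⊆ ℝⁿ (n ≥ 2) be a closed set with nonempty interior. If E is weakly 1-semiconvex (i.e., E can be approximated from the outside by a family of open weakly 1-semiconvex sets), then the interior of E is weakly 1-semiconvex (i.e., through every boundary point of Int E there passes a closed ray not intersecting Int E). -/
open Set Metric

/-- A preconnected set meeting both a set and its complement meets its frontier. -/
lemma aux_inter_frontier_nonempty {X : Type*} [TopologicalSpace X] {s u : Set X}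
    (hs : IsPreconnected s) (h1 : (s ∩ u).Nonempty) (h2 : (s \ u).Nonempty) :
    (s ∩ frontier u).Nonempty := by
  by_contra h
  rw [Set.not_nonempty_iff_eq_empty] at h
  have hdisj : ∀ z ∈ s, z ∉ frontier u := by
    intro z hz hzf
    exact absurd (Set.mem_inter hz hzf) (by rw [h]; exact notMem_empty z)
  have hsub : s ⊆ interior u ∪ interior uᶜ := by
    intro z hz
    have hz' := hdisj z hz
    rw [frontier_eq_closure_inter_closure] at hz'
    by_cases hzc : z ∈ closure u
    · left
      have hnc : z ∉ closure uᶜ := fun hc => hz' ⟨hzc, hc⟩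
      rw [closure_compl] at hnc
      simpa using hnc
    · right
      rw [interior_compl]
      exact hzc
  obtain ⟨w, hws, hwu⟩ := h1
  obtain ⟨v, hvs, hvu⟩ := h2
  have hw' : w ∈ interior u := by
    rcases hsub hws with h' | h'
    · exact h'
    · exact absurd (interior_subset h' : w ∈ uᶜ) (by simpa using hwu)
  have hv' : v ∈ interior uᶜ := by
    rcases hsub hvs with h' | h'
    · exact absurd (interior_subset h') hvu
    · exact h'
  obtain ⟨z, hz⟩ := hs (interior u) (interior uᶜ) isOpen_interior isOpen_interior hsub
    ⟨w, hws, hw'⟩ ⟨v, hvs, hv'⟩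
  exact absurd (interior_subset hz.2.2 : z ∈ uᶜ) (by simpa using interior_subset hz.2.1)

theorem interior_weaklySemiconvex {n : ℕ} (hn : 2 ≤ n) (E : Set (EuclideanSpace ℝ (Fin n)))
    (hcl : IsClosed E) (hint : (interior E).Nonempty)
    (G : ℕ → Set (EuclideanSpace ℝ (Fin n)))
    (hGopen : ∀ k, IsOpen (G k)) (hGws : ∀ k, WeaklySemiconvex (G k))
    (hGnest : ∀ k, closure (G (k + 1)) ⊆ G k) (hGE : E = ⋂ k, G k) :
    WeaklySemiconvex (interior E) := by
  intro x hx
  by_contra hcon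
  push_neg at hcon
  have hcon' : ∀ α : EuclideanSpace ℝ (Fin n), ‖α‖ = 1 →
      (ray x α ∩ interior E).Nonempty := by
    intro α hα
    exact hcon α hα
  have hxE : x ∈ E := by
    have h1 : x ∈ closure (interior E) := frontier_subset_closure hx
    have h2 : closure (interior E) ⊆ closure E := closure_mono interior_subset
    rw [hcl.closure_eq] at h2
    exact h2 h1
  have hxnotint : x ∉ interior E := by
    have := hx.2
    rwa [interior_interior] at this
  -- tube lemma step
  have key : ∀ α ∈ sphere (0 : EuclideanSpace ℝ (Fin n)) 1, ∃ δ > 0,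
      ∀ y ∈ ball x δ, ∀ β ∈ ball α δ, (ray y β ∩ interior E).Nonempty := by
    intro α hα
    have hα1 : ‖α‖ = 1 := by simpa using hα
    obtain ⟨z, ⟨t, ht0, hzt⟩, hzE⟩ := hcon' α hα1
    subst hzt
    have hcont : Continuous fun p : EuclideanSpace ℝ (Fin n) × EuclideanSpace ℝ (Fin n) =>
        p.1 + t • p.2 := continuous_fst.add (continuous_snd.const_smul t)
    have hopen : IsOpen {p : EuclideanSpace ℝ (Fin n) × EuclideanSpace ℝ (Fin n) |
        p.1 + t • p.2 ∈ interior E} := isOpen_interior.preimage hcont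
    obtain ⟨δ, hδ0, hδ⟩ := Metric.isOpen_iff.mp hopen (x, α) hzE
    refine ⟨δ, hδ0, fun y hy β hβ => ?_⟩
    have : (y, β) ∈ ball (x, α) δ := by
      rw [Metric.mem_ball, Prod.dist_eq]
      exact max_lt hy hβ
    exact ⟨y + t • β, ⟨t, ht0, rfl⟩, hδ this⟩
  -- extract a finite subcover of the sphere
  have hsph : IsCompact (sphere (0 : EuclideanSpace ℝ (Fin n)) 1) := isCompact_sphere _ _
  choose! δ hδ0 hδ using key
  obtain ⟨s, hsSub, hsCov⟩ := hsph.elim_nhds_subcover (fun α => ball α (δ α)) (fun α hα =>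
    ball_mem_nhds α (hδ0 α hα))
  haveI : Nonempty (Fin n) := ⟨⟨0, by omega⟩⟩
  have hsphne : (sphere (0 : EuclideanSpace ℝ (Fin n)) 1).Nonempty :=
    NormedSpace.sphere_nonempty.mpr zero_le_one
  have hsne : s.Nonempty := by
    obtain ⟨α, hα⟩ := hsphne
    obtain ⟨β, hβ, _⟩ := Set.mem_iUnion₂.mp (hsCov hα)
    exact ⟨β, hβ⟩
  set ε : ℝ := s.inf' hsne δ with hεdef
  have hεpos : 0 < ε := by
    rw [hεdef, Finset.lt_inf'_iff]
    exact fun α hα => hδ0 α (hsSub α hα)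
  -- every point of `ball x ε` has all rays meeting `interior E`
  have hball : ∀ y ∈ ball x ε, ∀ β : EuclideanSpace ℝ (Fin n), ‖β‖ = 1 →
      (ray y β ∩ interior E).Nonempty := by
    intro y hy β hβ
    have hβs : β ∈ sphere (0 : EuclideanSpace ℝ (Fin n)) 1 := by simpa using hβ
    obtain ⟨α, hαs, hβα⟩ := Set.mem_iUnion₂.mp (hsCov hβs)
    have hεle : ε ≤ δ α := Finset.inf'_le _ hαs
    exact hδ α (hsSub α hαs) y (mem_ball.mpr (lt_of_lt_of_le (mem_ball.mp hy) hεle)) β hβα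
  -- find a point near x outside E
  have hy0 : ∃ y ∈ ball x ε, y ∉ E := by
    by_contra h
    push_neg at h
    exact hxnotint (mem_interior_iff_mem_nhds.mpr
      (Filter.mem_of_superset (ball_mem_nhds x hεpos) h))
  obtain ⟨y0, hy0ball, hy0E⟩ := hy0
  have hy0G : ∃ k, y0 ∉ G k := by
    by_contra h
    push_neg at h
    exact hy0E (hGE ▸ Set.mem_iInter.mpr h)
  obtain ⟨k, hkG⟩ := hy0G
  have hEGk : E ⊆ G k := hGE ▸ Set.iInter_subset G k
  have hxGk : x ∈ G k := hEGk hxE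
  -- the segment from y0 to x meets the frontier of G k
  have hseg : IsPreconnected (segment ℝ y0 x) := (convex_segment y0 x).isPreconnected
  obtain ⟨z, hzseg, hzfr⟩ := aux_inter_frontier_nonempty hseg
    ⟨x, right_mem_segment ℝ y0 x, hxGk⟩ ⟨y0, left_mem_segment ℝ y0 x, hkG⟩
  have hzball : z ∈ ball x ε :=
    (convex_ball x ε).segment_subset hy0ball (mem_ball_self hεpos) hzseg
  obtain ⟨α, hα1, hαray⟩ := hGws k z hzfr
  obtain ⟨w, hwray, hwE⟩ := hball z hzball α hα1
  have : w ∈ ray z α ∩ G k := ⟨hwray, hEGk (interior_subset hwE)⟩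
  rw [hαray] at this
  exact this
end

section
/- Let E ⊆ ℝⁿ (n ≥ 2) be an open weakly 1-semiconvex set with E^◇ ≠ ∅. Then there exists a family of closed rays {η(x)}_{x ∈ ∂E^◇}, each η(x) having endpoint x, such that (i) each η(x) is disjoint from E, and (ii) the union ⋃_{x ∈ ∂E^◇} η(x) ∪ E^◇ contains no closed ray whose endpoint lies in E^◇. -/
open Set Metric

theorem diamond_ray_family {n : ℕ} (hn : 2 ≤ n) (E : Set (EuclideanSpace ℝ (Fin n)))
    (hE : IsOpen E) (hws : WeaklySemiconvex E) (hne : (diamond E).Nonempty) :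
    ∃ η : EuclideanSpace ℝ (Fin n) → Set (EuclideanSpace ℝ (Fin n)),
      (∀ x ∈ frontier (diamond E),
        (∃ α : EuclideanSpace ℝ (Fin n), ‖α‖ = 1 ∧ η x = ray x α) ∧ η x ∩ E = ∅) ∧
      ¬ ∃ y ∈ diamond E, ∃ α : EuclideanSpace ℝ (Fin n), ‖α‖ = 1 ∧
          ray y α ⊆ (⋃ x ∈ frontier (diamond E), η x) ∪ diamond E := by
  classical
  -- diamond E is open
  have hopen : IsOpen (diamond E) := by
    rw [isOpen_iff_mem_nhds]
    intro x hx
    -- x is not in the closure of E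
    have hxc : x ∉ closure E := by
      intro hcl
      have hfr : x ∈ frontier E := by
        rw [frontier, hE.interior_eq]
        exact ⟨hcl, hx.1⟩
      obtain ⟨α, hα, hαE⟩ := hws x hfr
      have := hx.2 α hα
      rw [hαE] at this
      exact this.ne_empty rfl
    -- the set U of pairs (y, α) such that ray y α meets E is open
    set U : Set (EuclideanSpace ℝ (Fin n) × EuclideanSpace ℝ (Fin n)) :=
      {p | ∃ t : ℝ, 0 ≤ t ∧ p.1 + t • p.2 ∈ E} with hU
    have hUopen : IsOpen U := by
      have : U = ⋃ t ∈ Ici (0:ℝ),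
          {p : EuclideanSpace ℝ (Fin n) × EuclideanSpace ℝ (Fin n) | p.1 + t • p.2 ∈ E} := by
        ext p
        simp [hU, mem_iUnion]
      rw [this]
      refine isOpen_biUnion fun t _ => ?_
      exact hE.preimage (continuous_fst.add (continuous_snd.const_smul t))
    have hsub : ({x} ×ˢ sphere (0 : EuclideanSpace ℝ (Fin n)) 1) ⊆ U := by
      rintro ⟨y, α⟩ ⟨hy, hαs⟩
      simp only [mem_singleton_iff] at hy
      subst hy
      have hα : ‖α‖ = 1 := by rwa [mem_sphere_zero_iff_norm] at hαs
      obtain ⟨z, ⟨t, ht, hz⟩, hzE⟩ := hx.2 α hα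
      exact ⟨t, ht, by rwa [← hz]⟩
    obtain ⟨u, v, hu, _, hxu, hsv, huv⟩ :=
      generalized_tube_lemma isCompact_singleton
        (isCompact_sphere (0 : EuclideanSpace ℝ (Fin n)) 1) hUopen hsub
    have hmem : u ∩ (closure E)ᶜ ∈ nhds x :=
      (hu.inter isClosed_closure.isOpen_compl).mem_nhds ⟨hxu (mem_singleton x), hxc⟩
    refine Filter.mem_of_superset hmem ?_
    rintro y ⟨hyu, hyc⟩
    refine ⟨fun hyE => hyc (subset_closure hyE), fun α hα => ?_⟩
    have : (y, α) ∈ U := huv ⟨hyu, hsv (by rwa [mem_sphere_zero_iff_norm])⟩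
    obtain ⟨t, ht, htE⟩ := this
    exact ⟨y + t • α, ⟨t, ht, rfl⟩, htE⟩
  -- every frontier point of diamond E has a ray missing E
  have hkey : ∀ x ∈ frontier (diamond E),
      ∃ α : EuclideanSpace ℝ (Fin n), ‖α‖ = 1 ∧ ray x α ∩ E = ∅ := by
    intro x hx
    have hxd : x ∉ diamond E := by
      intro hxd
      exact (hopen.frontier_eq ▸ hx).2 hxd
    have hxE : x ∉ E := by
      intro hxE
      have : x ∈ closure (diamond E) := hx.1
      have : x ∈ closure Eᶜ :=
        closure_mono (fun z hz => hz.1) this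
      rw [hE.isClosed_compl.closure_eq] at this
      exact this hxE
    simp only [diamond, mem_setOf_eq, not_and, not_forall] at hxd
    obtain ⟨α, hα, hne'⟩ := hxd hxE
    exact ⟨α, hα, not_nonempty_iff_eq_empty.mp hne'⟩
  -- define the family of rays
  refine ⟨fun x => if h : ∃ α : EuclideanSpace ℝ (Fin n), ‖α‖ = 1 ∧ ray x α ∩ E = ∅
      then ray x h.choose else ∅, ?_, ?_⟩
  · intro x hx
    have h := hkey x hx
    simp only [dif_pos h]
    exact ⟨⟨h.choose, h.choose_spec.1, rfl⟩, h.choose_spec.2⟩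
  · rintro ⟨y, hy, α, hα, hsubr⟩
    obtain ⟨z, hzr, hzE⟩ := hy.2 α hα
    rcases hsubr hzr with hz | hz
    · simp only [mem_iUnion] at hz
      obtain ⟨x, hx, hzx⟩ := hz
      have h := hkey x hx
      simp only [dif_pos h] at hzx
      have : z ∈ ray x h.choose ∩ E := ⟨hzx, hzE⟩
      rw [h.choose_spec.2] at this
      exact this
    · exact hz.1 hzE
end

section
/- There exists an open set E ⊆ ℝ³ that is both weakly 1-convex and weakly 1-semiconvex, such that its 1-nonconvexity-point set E^△ and its 1-nonsemiconvexity-point set E^◇ coincide and form a nonempty set that is bounded, connected, and not convex. -/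
open Set Metric

/-! ### Auxiliary construction

`Kp` describes the closed set: the solid hyperboloid slab
`{x² + y² ≤ 1 + z², |z| ≤ 1}` together with the full one-sheeted hyperboloid
surface `{x² + y² = 1 + z²}` and the two planes `z = ±1`.  Our example is its
open complement `Eset`. -/

def Kp (p : EuclideanSpace ℝ (Fin 3)) : Prop :=
  p 2 = 1 ∨ p 2 = -1 ∨ (p 0)^2 + (p 1)^2 - (p 2)^2 - 1 = 0 ∨
    ((p 2)^2 ≤ 1 ∧ (p 0)^2 + (p 1)^2 - (p 2)^2 - 1 ≤ 0)

def Eset : Set (EuclideanSpace ℝ (Fin 3)) := {p | ¬ Kp p}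

/-- The region that will turn out to be `triangle Eset = diamond Eset`. -/
def Tset : Set (EuclideanSpace ℝ (Fin 3)) :=
  {p | (p 2)^2 < 1 ∧ (p 0)^2 + (p 1)^2 - (p 2)^2 - 1 < 0}

lemma mem_Eset_iff (p : EuclideanSpace ℝ (Fin 3)) :
    p ∈ Eset ↔ p 2 ≠ 1 ∧ p 2 ≠ -1 ∧ (p 0)^2 + (p 1)^2 - (p 2)^2 - 1 ≠ 0 ∧
      (1 < (p 2)^2 ∨ 0 < (p 0)^2 + (p 1)^2 - (p 2)^2 - 1) := by
  simp only [Eset, mem_setOf_eq, Kp]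
  push_neg
  constructor
  · rintro ⟨h1, h2, h3, h4⟩
    exact ⟨h1, h2, h3, (lt_or_ge 1 ((p 2)^2)).imp id h4⟩
  · rintro ⟨h1, h2, h3, h4⟩
    exact ⟨h1, h2, h3, fun hle => h4.resolve_left (not_lt.mpr hle)⟩

lemma isOpen_Eset : IsOpen Eset := by
  have h0 : Continuous fun p : EuclideanSpace ℝ (Fin 3) => p 0 := (EuclideanSpace.proj (0 : Fin 3)).continuous
  have h1 : Continuous fun p : EuclideanSpace ℝ (Fin 3) => p 1 := (EuclideanSpace.proj (1 : Fin 3)).continuous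
  have h2 : Continuous fun p : EuclideanSpace ℝ (Fin 3) => p 2 := (EuclideanSpace.proj (2 : Fin 3)).continuous
  have hQ : Continuous fun p : EuclideanSpace ℝ (Fin 3) =>
      (p 0)^2 + (p 1)^2 - (p 2)^2 - 1 := by fun_prop
  have : IsClosed {p : EuclideanSpace ℝ (Fin 3) | Kp p} := by
    have c1 : IsClosed {p : EuclideanSpace ℝ (Fin 3) | p 2 = 1} := isClosed_eq h2 continuous_const
    have c2 : IsClosed {p : EuclideanSpace ℝ (Fin 3) | p 2 = -1} := isClosed_eq h2 continuous_const
    have c3 : IsClosed {p : EuclideanSpace ℝ (Fin 3) | (p 0)^2 + (p 1)^2 - (p 2)^2 - 1 = 0} :=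
      isClosed_eq hQ continuous_const
    have c4 : IsClosed {p : EuclideanSpace ℝ (Fin 3) |
        (p 2)^2 ≤ 1 ∧ (p 0)^2 + (p 1)^2 - (p 2)^2 - 1 ≤ 0} := by
      rw [setOf_and]
      exact (isClosed_le (h2.pow 2) continuous_const).inter (isClosed_le hQ continuous_const)
    have heq : {p : EuclideanSpace ℝ (Fin 3) | Kp p} =
        {p | p 2 = 1} ∪ {p | p 2 = -1} ∪ {p | (p 0)^2 + (p 1)^2 - (p 2)^2 - 1 = 0} ∪
        {p | (p 2)^2 ≤ 1 ∧ (p 0)^2 + (p 1)^2 - (p 2)^2 - 1 ≤ 0} := by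
      ext p; simp [Kp, or_assoc]
    rw [heq]
    exact ((c1.union c2).union c3).union c4
  exact this.isOpen_compl

lemma isOpen_Tset : IsOpen Tset := by
  have h2 : Continuous fun p : EuclideanSpace ℝ (Fin 3) => p 2 := (EuclideanSpace.proj (2 : Fin 3)).continuous
  have hQ : Continuous fun p : EuclideanSpace ℝ (Fin 3) =>
      (p 0)^2 + (p 1)^2 - (p 2)^2 - 1 := by
    have h0 : Continuous fun p : EuclideanSpace ℝ (Fin 3) => p 0 := (EuclideanSpace.proj (0 : Fin 3)).continuous
    have h1 : Continuous fun p : EuclideanSpace ℝ (Fin 3) => p 1 := (EuclideanSpace.proj (1 : Fin 3)).continuous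
    fun_prop
  have : Tset = {p : EuclideanSpace ℝ (Fin 3) | (p 2)^2 < 1} ∩
      {p | (p 0)^2 + (p 1)^2 - (p 2)^2 - 1 < 0} := by
    ext p; simp [Tset]
  rw [this]
  exact (isOpen_lt (h2.pow 2) continuous_const).inter (isOpen_lt hQ continuous_const)

lemma Tset_subset_Kp {p : EuclideanSpace ℝ (Fin 3)} (hp : p ∈ Tset) : Kp p :=
  Or.inr (Or.inr (Or.inr ⟨hp.1.le, hp.2.le⟩))

lemma Tset_notmem_Eset {p : EuclideanSpace ℝ (Fin 3)} (hp : p ∈ Tset) : p ∉ Eset :=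
  fun h => h (Tset_subset_Kp hp)

noncomputable def v3 (a b c : ℝ) : EuclideanSpace ℝ (Fin 3) :=
  (WithLp.equiv 2 (Fin 3 → ℝ)).symm ![a,b,c]

@[simp] lemma v3_0 (a b c : ℝ) : v3 a b c 0 = a := rfl
@[simp] lemma v3_1 (a b c : ℝ) : v3 a b c 1 = b := rfl
@[simp] lemma v3_2 (a b c : ℝ) : v3 a b c 2 = c := rfl

lemma v3_ne_zero {a b c : ℝ} (h : c ≠ 0) : v3 a b c ≠ 0 := by
  intro hz
  apply h
  have h2 : v3 a b c 2 = (0 : EuclideanSpace ℝ (Fin 3)) 2 := by rw [hz]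
  simpa using h2

lemma v3_ne_zero0 {a b c : ℝ} (h : a ≠ 0) : v3 a b c ≠ 0 := by
  intro hz
  apply h
  have h2 : v3 a b c 0 = (0 : EuclideanSpace ℝ (Fin 3)) 0 := by rw [hz]
  simpa using h2

lemma line_smul (x d : EuclideanSpace ℝ (Fin 3)) {c : ℝ} (hc : c ≠ 0) :
    line x (c • d) = line x d := by
  ext z
  constructor
  · rintro ⟨t, rfl⟩; exact ⟨t * c, by rw [smul_smul]⟩
  · rintro ⟨t, rfl⟩; exact ⟨t / c, by rw [smul_smul, div_mul_cancel₀ _ hc]⟩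

lemma unit_coords {α : EuclideanSpace ℝ (Fin 3)} (h : ‖α‖ = 1) :
    (α 0)^2 + (α 1)^2 + (α 2)^2 = 1 := by
  rw [EuclideanSpace.norm_eq, Fin.sum_univ_three] at h
  simp only [Real.norm_eq_abs, sq_abs] at h
  nlinarith [Real.sq_sqrt (by positivity : (0:ℝ) ≤ (α 0)^2 + (α 1)^2 + (α 2)^2)]

/-- Through any point with `z = ±1` or lying on the hyperboloid, a full line misses `Eset`:
for `z = ±1` use a horizontal line inside the plane, for the hyperboloid use a ruling. -/
lemma exists_line_miss (x : EuclideanSpace ℝ (Fin 3))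
    (hx : x 2 = 1 ∨ x 2 = -1 ∨ (x 0)^2 + (x 1)^2 - (x 2)^2 - 1 = 0) :
    ∃ α : EuclideanSpace ℝ (Fin 3), ‖α‖ = 1 ∧ line x α ∩ Eset = ∅ := by
  have key : ∃ d : EuclideanSpace ℝ (Fin 3), d ≠ 0 ∧ ∀ t : ℝ, Kp (x + t • d) := by
    rcases hx with h | h | h
    · exact ⟨v3 1 0 0, v3_ne_zero0 one_ne_zero, fun t => Or.inl (by simpa using h)⟩
    · exact ⟨v3 1 0 0, v3_ne_zero0 one_ne_zero, fun t => Or.inr (Or.inl (by simpa using h))⟩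
    · refine ⟨v3 (x 2 * x 0 + x 1) (x 2 * x 1 - x 0) ((x 0)^2 + (x 1)^2),
        v3_ne_zero ?_, fun t => ?_⟩
      · nlinarith
      · right; right; left
        simp only [PiLp.add_apply, PiLp.smul_apply, smul_eq_mul, v3_0, v3_1, v3_2]
        linear_combination (1 - t^2*((x 0)^2 + (x 1)^2)) * h
  obtain ⟨d, hd, hK⟩ := key
  refine ⟨‖d‖⁻¹ • d, norm_smul_inv_norm hd, ?_⟩
  rw [line_smul x d (inv_ne_zero (norm_ne_zero_iff.mpr hd))]
  ext z
  simp only [mem_inter_iff, mem_empty_iff_false, iff_false, not_and]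
  rintro ⟨t, rfl⟩
  exact fun hE => hE (hK t)

lemma mem_Eset_of {q : EuclideanSpace ℝ (Fin 3)} (hz : 1 < (q 2)^2)
    (hQ : (q 0)^2 + (q 1)^2 - (q 2)^2 - 1 ≠ 0) : q ∈ Eset := by
  rw [mem_Eset_iff]
  refine ⟨?_, ?_, hQ, Or.inl hz⟩
  · intro h; rw [h] at hz; norm_num at hz
  · intro h; rw [h] at hz; norm_num at hz

/-- From any point of the open region `Tset`, every ray (in any unit direction) hits `Eset`. -/
lemma exists_ray_hit (p : EuclideanSpace ℝ (Fin 3)) (h2 : (p 2)^2 < 1)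
    (hQ : (p 0)^2 + (p 1)^2 - (p 2)^2 - 1 < 0) (α : EuclideanSpace ℝ (Fin 3)) (hα : ‖α‖ = 1) :
    ∃ t : ℝ, 0 ≤ t ∧ p + t • α ∈ Eset := by
  have hco : ∀ (t : ℝ) (i : Fin 3), (p + t • α) i = p i + t * α i := fun t i => by simp
  have hu : (α 0)^2 + (α 1)^2 + (α 2)^2 = 1 := unit_coords hα
  by_cases hC : α 2 = 0
  · -- horizontal direction: push out radially
    refine ⟨2*|p 0 * α 0 + p 1 * α 1| + |(p 0)^2 + (p 1)^2 - (p 2)^2 - 1| + 1, by positivity, ?_⟩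
    rw [mem_Eset_iff]
    simp only [hco, hC]
    set t : ℝ := 2*|p 0 * α 0 + p 1 * α 1| + |(p 0)^2 + (p 1)^2 - (p 2)^2 - 1| + 1 with ht
    have ht1 : (1:ℝ) ≤ t := by
      have := abs_nonneg (p 0 * α 0 + p 1 * α 1)
      have := abs_nonneg ((p 0)^2 + (p 1)^2 - (p 2)^2 - 1)
      rw [ht]; linarith
    have ht0 : (0:ℝ) ≤ t := by linarith
    have hAB : (α 0)^2 + (α 1)^2 = 1 := by rw [hC] at hu; simpa using hu
    have hpos : 0 < (p 0 + t * α 0)^2 + (p 1 + t * α 1)^2 - (p 2 + t * 0)^2 - 1 := by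
      have e1 : t - 2*|p 0 * α 0 + p 1 * α 1| = |(p 0)^2 + (p 1)^2 - (p 2)^2 - 1| + 1 := by
        rw [ht]; ring
      have e2 : 1 * (|(p 0)^2 + (p 1)^2 - (p 2)^2 - 1| + 1)
          ≤ t * (t - 2*|p 0 * α 0 + p 1 * α 1|) := by
        rw [e1]
        exact mul_le_mul_of_nonneg_right ht1 (by positivity)
      have e3 : -(t*|p 0 * α 0 + p 1 * α 1|) ≤ t * (p 0 * α 0 + p 1 * α 1) := by
        have h1 := neg_abs_le (t * (p 0 * α 0 + p 1 * α 1))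
        rwa [abs_mul, abs_of_nonneg ht0] at h1
      have hsq : t^2*((α 0)^2 + (α 1)^2) = t^2 := by rw [hAB]; ring
      nlinarith [e2, e3, hsq, le_abs_self ((p 0)^2 + (p 1)^2 - (p 2)^2 - 1),
        neg_abs_le ((p 0)^2 + (p 1)^2 - (p 2)^2 - 1)]
    refine ⟨?_, ?_, ne_of_gt hpos, Or.inr hpos⟩
    · intro h; nlinarith [h2, sq_nonneg (p 2 - 1)]
    · intro h; nlinarith [h2, sq_nonneg (p 2 + 1)]
  · -- direction with vertical component: escape above |z| = 1, avoiding the surface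
    have hC2 : 0 < |α 2| := abs_pos.mpr hC
    set T : ℝ := (2 + |p 2|)/|α 2| with hT
    have hT0 : 0 < T := by positivity
    have hzbig : ∀ t : ℝ, T ≤ t → 1 < (p 2 + t * α 2)^2 := by
      intro t htT
      have ht0 : 0 ≤ t := le_trans hT0.le htT
      have hs : 2 + |p 2| ≤ t * |α 2| := by
        rw [hT, div_le_iff₀ hC2] at htT; linarith
      have key : -( |p 2| * (t * |α 2|)) ≤ p 2 * (t * α 2) := by
        have h1 := neg_abs_le (p 2 * (t * α 2))
        rw [abs_mul, abs_mul, abs_of_nonneg ht0] at h1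
        exact h1
      have habs : (t * α 2)^2 = (t * |α 2|)^2 := by
        rw [mul_pow, mul_pow, sq_abs]
      have h4 : 4 ≤ (t * |α 2| - |p 2|)^2 := by nlinarith [hs]
      nlinarith [key, h4, habs, sq_abs (p 2)]
    by_cases hq1 : (p 0 + T * α 0)^2 + (p 1 + T * α 1)^2 - (p 2 + T * α 2)^2 - 1 = 0
    · by_cases hq2 : (p 0 + 2*T * α 0)^2 + (p 1 + 2*T * α 1)^2 - (p 2 + 2*T * α 2)^2 - 1 = 0
      · refine ⟨3*T, by positivity, mem_Eset_of ?_ ?_⟩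
        · rw [hco]; exact hzbig _ (by linarith)
        · simp only [hco]
          have h3 : (p 0 + 3*T * α 0)^2 + (p 1 + 3*T * α 1)^2 - (p 2 + 3*T * α 2)^2 - 1
              = (p 0)^2 + (p 1)^2 - (p 2)^2 - 1 := by linear_combination 3*hq2 - 3*hq1
          rw [h3]; exact ne_of_lt hQ
      · refine ⟨2*T, by positivity, mem_Eset_of ?_ ?_⟩
        · rw [hco]; exact hzbig _ (by linarith)
        · simp only [hco]; exact hq2
    · refine ⟨T, hT0.le, mem_Eset_of ?_ ?_⟩
      · rw [hco]; exact hzbig _ le_rfl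
      · simp only [hco]; exact hq1

/-- Every point of `Kp` that is not in the open region `Tset` satisfies one of the three
"ruled" alternatives. -/
lemma Kp_cases {p : EuclideanSpace ℝ (Fin 3)} (hK : Kp p) (hT : p ∉ Tset) :
    p 2 = 1 ∨ p 2 = -1 ∨ (p 0)^2 + (p 1)^2 - (p 2)^2 - 1 = 0 := by
  rcases hK with h | h | h | ⟨h1, h2⟩
  · exact Or.inl h
  · exact Or.inr (Or.inl h)
  · exact Or.inr (Or.inr h)
  · rcases lt_or_eq_of_le h2 with h2' | h2'
    · have h1' : (p 2)^2 = 1 := by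
        by_contra hne
        exact hT ⟨lt_of_le_of_ne h1 hne, h2'⟩
      have : (p 2 - 1) * (p 2 + 1) = 0 := by nlinarith
      rcases mul_eq_zero.mp this with h | h
      · exact Or.inl (by linarith)
      · exact Or.inr (Or.inl (by linarith))
    · exact Or.inr (Or.inr h2')

lemma frontier_Eset_subset {x : EuclideanSpace ℝ (Fin 3)} (hx : x ∈ frontier Eset) :
    Kp x ∧ x ∉ Tset := by
  rw [isOpen_Eset.frontier_eq] at hx
  obtain ⟨hcl, hnE⟩ := hx
  refine ⟨not_not.mp hnE, fun hT => ?_⟩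
  have hdisj : Eset ⊆ Tsetᶜ := fun p hp hpT => Tset_notmem_Eset hpT hp
  have : closure Eset ⊆ Tsetᶜ := closure_minimal hdisj isOpen_Tset.isClosed_compl
  exact this hcl hT

lemma weaklyConvex_Eset : WeaklyConvex Eset := by
  intro x hx
  obtain ⟨hK, hT⟩ := frontier_Eset_subset hx
  exact exists_line_miss x (Kp_cases hK hT)

lemma ray_subset_line (x α : EuclideanSpace ℝ (Fin 3)) : ray x α ⊆ line x α := by
  rintro z ⟨t, _, rfl⟩; exact ⟨t, rfl⟩

lemma weaklySemiconvex_Eset : WeaklySemiconvex Eset := by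
  intro x hx
  obtain ⟨α, hα, hmiss⟩ := weaklyConvex_Eset x hx
  refine ⟨α, hα, ?_⟩
  exact subset_empty_iff.mp
    (le_trans (inter_subset_inter_left _ (ray_subset_line x α)) hmiss.le)

lemma Tset_subset_diamond : Tset ⊆ diamond Eset := by
  intro p hp
  refine ⟨Tset_notmem_Eset hp, fun α hα => ?_⟩
  obtain ⟨t, ht0, htE⟩ := exists_ray_hit p hp.1 hp.2 α hα
  exact ⟨p + t • α, ⟨t, ht0, rfl⟩, htE⟩

lemma diamond_subset_triangle : diamond Eset ⊆ triangle Eset := by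
  rintro x ⟨hxE, h⟩
  refine ⟨hxE, fun α hα => ?_⟩
  obtain ⟨z, hz, hzE⟩ := h α hα
  exact ⟨z, ray_subset_line x α hz, hzE⟩

lemma triangle_subset_Tset : triangle Eset ⊆ Tset := by
  rintro x ⟨hxE, h⟩
  by_contra hT
  obtain ⟨α, hα, hmiss⟩ := exists_line_miss x (Kp_cases (not_not.mp hxE) hT)
  obtain ⟨z, hz⟩ := h α hα
  rw [hmiss] at hz
  exact hz

lemma triangle_Eset : triangle Eset = Tset :=
  le_antisymm triangle_subset_Tset (le_trans Tset_subset_diamond diamond_subset_triangle)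

lemma diamond_Eset : diamond Eset = Tset :=
  le_antisymm (le_trans diamond_subset_triangle triangle_subset_Tset) Tset_subset_diamond

lemma zero_mem_Tset : (0 : EuclideanSpace ℝ (Fin 3)) ∈ Tset := by
  constructor <;> norm_num

lemma bounded_Tset : Bornology.IsBounded Tset := by
  apply isBounded_closedBall (x := (0 : EuclideanSpace ℝ (Fin 3))) (r := 2) |>.subset
  intro p hp
  rw [mem_closedBall_zero_iff]
  have hle : (p 0)^2 + (p 1)^2 + (p 2)^2 ≤ 4 := by
    obtain ⟨h1, h2⟩ := hp
    nlinarith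
  rw [EuclideanSpace.norm_eq, Fin.sum_univ_three]
  simp only [Real.norm_eq_abs, sq_abs]
  calc Real.sqrt ((p 0)^2 + (p 1)^2 + (p 2)^2) ≤ Real.sqrt 4 := Real.sqrt_le_sqrt hle
    _ = 2 := by
        rw [show (4:ℝ) = 2^2 by norm_num, Real.sqrt_sq (by norm_num : (0:ℝ) ≤ 2)]

lemma starConvex_Tset : StarConvex ℝ (0 : EuclideanSpace ℝ (Fin 3)) Tset := by
  intro p hp a b ha hb hab
  obtain ⟨h1, h2⟩ := hp
  have hb1 : b ≤ 1 := by linarith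
  have hco : ∀ i : Fin 3, (a • (0 : EuclideanSpace ℝ (Fin 3)) + b • p) i = b * p i := by
    intro i; simp
  have hb2 : b^2 ≤ 1 := by nlinarith
  constructor
  · rw [hco]
    nlinarith [mul_nonneg (sub_nonneg.mpr hb2) (sq_nonneg (p 2))]
  · simp only [hco]
    rcases le_or_gt ((p 0)^2 + (p 1)^2 - (p 2)^2) 0 with hv | hv
    · nlinarith [mul_nonpos_of_nonneg_of_nonpos (sq_nonneg b) hv]
    · nlinarith [mul_nonneg (sub_nonneg.mpr hb2) hv.le]

lemma isConnected_Tset : IsConnected Tset := by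
  have : ContractibleSpace Tset := starConvex_Tset.contractibleSpace ⟨0, zero_mem_Tset⟩
  exact isConnected_iff_connectedSpace.mpr inferInstance

lemma not_convex_Tset : ¬ Convex ℝ Tset := by
  intro hconv
  have hp1 : v3 (6/5) 0 (9/10) ∈ Tset := by
    constructor <;> · simp only [Tset, mem_setOf_eq, v3_0, v3_1, v3_2]; norm_num
  have hp2 : v3 (6/5) 0 (-(9/10)) ∈ Tset := by
    constructor <;> · simp only [Tset, mem_setOf_eq, v3_0, v3_1, v3_2]; norm_num
  have hmid := hconv hp1 hp2 (by norm_num : (0:ℝ) ≤ 1/2) (by norm_num : (0:ℝ) ≤ 1/2)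
    (by norm_num)
  obtain ⟨hA, hB⟩ := hmid
  have hc0 : ∀ i : Fin 3,
      ((1/2 : ℝ) • v3 (6/5) 0 (9/10) + (1/2 : ℝ) • v3 (6/5) 0 (-(9/10))) i
        = (1/2 : ℝ) * (v3 (6/5) 0 (9/10)) i + (1/2 : ℝ) * (v3 (6/5) 0 (-(9/10))) i := by
    intro i; simp
  rw [hc0 0, hc0 1, hc0 2] at hB
  simp only [v3_0, v3_1, v3_2] at hB
  norm_num at hB

theorem exists_bounded_nonconvex_example :
    ∃ E : Set (EuclideanSpace ℝ (Fin 3)), IsOpen E ∧ WeaklyConvex E ∧ WeaklySemiconvex E ∧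
      triangle E = diamond E ∧ (triangle E).Nonempty ∧
      Bornology.IsBounded (triangle E) ∧ IsConnected (triangle E) ∧
      ¬ Convex ℝ (triangle E) := by
  refine ⟨Eset, isOpen_Eset, weaklyConvex_Eset, weaklySemiconvex_Eset, ?_, ?_, ?_, ?_, ?_⟩
  · rw [triangle_Eset, diamond_Eset]
  · rw [triangle_Eset]; exact ⟨0, zero_mem_Tset⟩
  · rw [triangle_Eset]; exact bounded_Tset
  · rw [triangle_Eset]; exact isConnected_Tset
  · rw [triangle_Eset]; exact not_convex_Tset
end

section
/- There exists an open set E ⊆ ℝ³ that is both weakly 1-convex and weakly 1-semiconvex, such that its 1-nonconvexity-point set E^△ and its 1-nonsemiconvexity-point set E^◇ coincide and form a nonempty set that is unbounded, connected, and not convex. -/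
open Set Metric

namespace UnboundedExample

noncomputable section

abbrev X := EuclideanSpace ℝ (Fin 3)

/-- the "shadow" coordinate `y - x²`. -/
def gg (p : X) : ℝ := p 1 - (p 0) ^ 2

/-- The example set. -/
def EE : Set X := {p | (1 < |gg p| ∧ |p 2| ≠ 1) ∨ (1 < |p 2| ∧ |gg p| ≠ 1)}

/-- The (expected) set of 1-nonconvexity points. -/
def DD : Set X := {p | |gg p| < 1 ∧ |p 2| < 1}

lemma apply_add_smul (p α : X) (t : ℝ) (i : Fin 3) : (p + t • α) i = p i + t * α i := by
  simp [PiLp.add_apply, PiLp.smul_apply, smul_eq_mul]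

lemma gg_add_smul (p α : X) (t : ℝ) :
    gg (p + t • α) = gg p + t * (α 1 - 2 * p 0 * α 0) - t ^ 2 * (α 0) ^ 2 := by
  simp only [gg, apply_add_smul]
  ring

lemma cont_coord (i : Fin 3) : Continuous (fun p : X => p i) := (PiLp.proj (𝕜 := ℝ) 2 (fun _ : Fin 3 => ℝ) i).continuous

lemma cont_gg : Continuous gg := by
  exact (cont_coord 1).sub ((cont_coord 0).pow 2)

lemma isOpen_EE : IsOpen EE := by
  apply IsOpen.union
  · exact ((isOpen_lt continuous_const cont_gg.abs).inter
      (isOpen_ne_fun (cont_coord 2).abs continuous_const))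
  · exact ((isOpen_lt continuous_const (cont_coord 2).abs).inter
      (isOpen_ne_fun cont_gg.abs continuous_const))

lemma isOpen_DD : IsOpen DD :=
  (isOpen_lt cont_gg.abs continuous_const).inter
    (isOpen_lt (cont_coord 2).abs continuous_const)

lemma DD_disjoint_EE : ∀ p ∈ DD, p ∉ EE := by
  rintro p ⟨h1, h2⟩ (⟨h3, _⟩ | ⟨h3, _⟩) <;> linarith

/-- Every point of the complement which is not in `DD` has `|gg p| = 1` or `|p 2| = 1`. -/
lemma crit_of_not_mem (p : X) (hE : p ∉ EE) (hD : p ∉ DD) : |gg p| = 1 ∨ |p 2| = 1 := by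
  by_contra h
  push_neg at h
  obtain ⟨h1, h2⟩ := h
  rcases lt_or_gt_of_ne h1 with hg | hg
  · rcases lt_or_gt_of_ne h2 with hz | hz
    · exact hD ⟨hg, hz⟩
    · exact hE (Or.inr ⟨hz, h1⟩)
  · exact hE (Or.inl ⟨hg, h2⟩)

/-- Unit vectors. -/
def e1x : X := EuclideanSpace.single 1 (1 : ℝ)
def e2x : X := EuclideanSpace.single 2 (1 : ℝ)

lemma norm_e1x : ‖e1x‖ = 1 := by simp [e1x]
lemma norm_e2x : ‖e2x‖ = 1 := by simp [e2x]

lemma e1x_apply (i : Fin 3) : e1x i = if i = 1 then 1 else 0 := by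
  simp [e1x, EuclideanSpace.single_apply]
lemma e2x_apply (i : Fin 3) : e2x i = if i = 2 then 1 else 0 := by
  simp [e2x, EuclideanSpace.single_apply]

/-- The ruling line through points with `|gg p| = 1` or `|p 2| = 1`. -/
lemma ruled (p : X) (hE : p ∉ EE) (hD : p ∉ DD) :
    ∃ α : X, ‖α‖ = 1 ∧ line p α ∩ EE = ∅ := by
  rcases crit_of_not_mem p hE hD with hc | hc
  · refine ⟨e2x, norm_e2x, ?_⟩
    apply Set.eq_empty_iff_forall_notMem.2
    rintro z ⟨⟨t, rfl⟩, hzE⟩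
    have h0 : (p + t • e2x) 0 = p 0 := by
      rw [apply_add_smul, e2x_apply]; norm_num [Fin.ext_iff]
    have h1 : (p + t • e2x) 1 = p 1 := by
      rw [apply_add_smul, e2x_apply]; norm_num [Fin.ext_iff]
    have hg : gg (p + t • e2x) = gg p := by
      simp [gg, h0, h1]
    rcases hzE with ⟨h3, _⟩ | ⟨_, h4⟩
    · rw [hg, hc] at h3; linarith
    · rw [hg] at h4; exact h4 hc
  · refine ⟨e1x, norm_e1x, ?_⟩
    apply Set.eq_empty_iff_forall_notMem.2
    rintro z ⟨⟨t, rfl⟩, hzE⟩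
    have h2 : (p + t • e1x) 2 = p 2 := by
      rw [apply_add_smul, e1x_apply]; norm_num [Fin.ext_iff]
    rcases hzE with ⟨_, h4⟩ | ⟨h3, _⟩
    · rw [h2] at h4; exact h4 hc
    · rw [h2, hc] at h3; linarith

lemma abs_lower (a b : ℝ) : |b| - |a| ≤ |a + b| := by
  have := abs_add_le (a + b) (-a)
  simp at this
  linarith [this]

/-- The trapping lemma : every ray from a point of `DD` meets `EE`. -/
lemma trapped (p : X) (hp : p ∈ DD) (α : X) (hα : ‖α‖ = 1) :
    ∃ t : ℝ, 0 ≤ t ∧ p + t • α ∈ EE := by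
  obtain ⟨hg, hz⟩ := hp
  have hα0 : ¬(α 0 = 0 ∧ α 1 = 0 ∧ α 2 = 0) := by
    rintro ⟨h0, h1, h2⟩
    have : α = 0 := by
      ext i
      fin_cases i <;> assumption
    rw [this] at hα
    simp at hα
  -- abbreviations
  set c : ℝ := α 1 - 2 * p 0 * α 0 with hc
  by_cases h0 : α 0 = 0
  · by_cases h2 : α 2 = 0
    · -- horizontal line in the plane z = p 2 ; α 1 ≠ 0
      have h1 : α 1 ≠ 0 := by tauto
      refine ⟨(2 + |gg p|) / |α 1|, by positivity, ?_⟩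
      set t : ℝ := (2 + |gg p|) / |α 1| with ht
      have ht0 : 0 ≤ t := by positivity
      have htα : t * |α 1| = 2 + |gg p| := by
        rw [ht, div_mul_cancel₀]
        exact abs_ne_zero.2 h1
      have hgt : gg (p + t • α) = gg p + t * α 1 := by
        rw [gg_add_smul, h0]; ring
      have habs : 2 ≤ |gg (p + t • α)| := by
        rw [hgt]
        have := abs_lower (gg p) (t * α 1)
        have h3 : |t * α 1| = t * |α 1| := by
          rw [abs_mul, abs_of_nonneg ht0]
        rw [h3, htα] at this
        linarith
      have hz2 : (p + t • α) 2 = p 2 := by rw [apply_add_smul, h2]; ring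
      exact Or.inl ⟨by linarith, by rw [hz2]; intro h; rw [h] at hz; linarith⟩
    · -- α 0 = 0, α 2 ≠ 0
      by_cases h1 : α 1 = 0
      · -- vertical escape : g constant with |g| < 1
        refine ⟨(2 + |p 2|) / |α 2|, by positivity, ?_⟩
        set t : ℝ := (2 + |p 2|) / |α 2| with ht
        have ht0 : 0 ≤ t := by positivity
        have htα : t * |α 2| = 2 + |p 2| := by
          rw [ht, div_mul_cancel₀]
          exact abs_ne_zero.2 h2
        have hz2 : (p + t • α) 2 = p 2 + t * α 2 := apply_add_smul p α t 2
        have habs : 2 ≤ |(p + t • α) 2| := by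
          rw [hz2]
          have := abs_lower (p 2) (t * α 2)
          have h3 : |t * α 2| = t * |α 2| := by
            rw [abs_mul, abs_of_nonneg ht0]
          rw [h3, htα] at this
          linarith
        have hgt : gg (p + t • α) = gg p := by
          rw [gg_add_smul, h0, h1]; ring
        exact Or.inr ⟨by linarith, by rw [hgt]; intro h; rw [h] at hg; linarith⟩
      · -- α 0 = 0, α 1 ≠ 0, α 2 ≠ 0 : both |g| and |z| eventually large
        refine ⟨max ((2 + |gg p|) / |α 1|) ((2 + |p 2|) / |α 2|), ?_, ?_⟩
        · exact le_trans (by positivity) (le_max_left _ _)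
        set t : ℝ := max ((2 + |gg p|) / |α 1|) ((2 + |p 2|) / |α 2|) with ht
        have ht0 : 0 ≤ t := le_trans (by positivity) (le_max_left _ _)
        have htα1 : 2 + |gg p| ≤ t * |α 1| := by
          rw [← div_le_iff₀ (abs_pos.2 h1)]
          exact le_max_left _ _
        have htα2 : 2 + |p 2| ≤ t * |α 2| := by
          rw [← div_le_iff₀ (abs_pos.2 h2)]
          exact le_max_right _ _
        have hgt : gg (p + t • α) = gg p + t * α 1 := by
          rw [gg_add_smul, h0]; ring
        have habs : 2 ≤ |gg (p + t • α)| := by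
          rw [hgt]
          have := abs_lower (gg p) (t * α 1)
          have h3 : |t * α 1| = t * |α 1| := by rw [abs_mul, abs_of_nonneg ht0]
          rw [h3] at this
          linarith
        have hz2 : (p + t • α) 2 = p 2 + t * α 2 := apply_add_smul p α t 2
        have habs2 : 2 ≤ |(p + t • α) 2| := by
          rw [hz2]
          have := abs_lower (p 2) (t * α 2)
          have h3 : |t * α 2| = t * |α 2| := by rw [abs_mul, abs_of_nonneg ht0]
          rw [h3] at this
          linarith
        exact Or.inl ⟨by linarith, by intro h; rw [h] at habs2; norm_num at habs2⟩
  · -- α 0 ≠ 0 : the shadow parabola plunges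
    have ha : (0:ℝ) < (α 0) ^ 2 := by positivity
    -- choose t large enough
    set T1 : ℝ := (|c| + 1) / (α 0) ^ 2 with hT1
    set T2 : ℝ := gg p + 2 with hT2
    by_cases h2 : α 2 = 0
    · refine ⟨max T1 T2, ?_, ?_⟩
      · exact le_trans (by positivity) (le_max_left _ _)
      set t : ℝ := max T1 T2 with htdef
      have ht0 : 0 ≤ t := le_trans (by positivity) (le_max_left _ _)
      have ht1 : |c| + 1 ≤ (α 0) ^ 2 * t := by
        rw [← div_le_iff₀' ha]
        exact le_max_left _ _
      have ht2 : gg p + 2 ≤ t := le_max_right _ _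
      have hver : gg (p + t • α) ≤ -2 := by
        rw [gg_add_smul, ← hc]
        have e1 : t * c ≤ t * |c| := mul_le_mul_of_nonneg_left (le_abs_self c) ht0
        have e2 : t * (|c| + 1) ≤ t * ((α 0) ^ 2 * t) := mul_le_mul_of_nonneg_left ht1 ht0
        nlinarith
      have hz2 : (p + t • α) 2 = p 2 := by rw [apply_add_smul, h2]; ring
      refine Or.inl ⟨?_, ?_⟩
      · have := neg_le_abs (gg (p + t • α))
        linarith
      · rw [hz2]; intro h; rw [h] at hz; linarith
    · refine ⟨max (max T1 T2) ((2 + |p 2|) / |α 2|), ?_, ?_⟩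
      · exact le_trans (by positivity) (le_trans (le_max_left _ _) (le_max_left _ _))
      set t : ℝ := max (max T1 T2) ((2 + |p 2|) / |α 2|) with htdef
      have ht0 : 0 ≤ t :=
        le_trans (by positivity) (le_trans (le_max_left _ _) (le_max_left _ _))
      have ht1 : |c| + 1 ≤ (α 0) ^ 2 * t := by
        rw [← div_le_iff₀' ha]
        exact le_trans (le_max_left _ _) (le_max_left _ _)
      have ht2 : gg p + 2 ≤ t := le_trans (le_max_right _ _) (le_max_left _ _)
      have ht3 : 2 + |p 2| ≤ t * |α 2| := by
        rw [← div_le_iff₀ (abs_pos.2 h2)]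
        exact le_max_right _ _
      have hver : gg (p + t • α) ≤ -2 := by
        rw [gg_add_smul, ← hc]
        have e1 : t * c ≤ t * |c| := mul_le_mul_of_nonneg_left (le_abs_self c) ht0
        have e2 : t * (|c| + 1) ≤ t * ((α 0) ^ 2 * t) := mul_le_mul_of_nonneg_left ht1 ht0
        nlinarith
      have hz2 : (p + t • α) 2 = p 2 + t * α 2 := apply_add_smul p α t 2
      have habs2 : 2 ≤ |(p + t • α) 2| := by
        rw [hz2]
        have := abs_lower (p 2) (t * α 2)
        have h3 : |t * α 2| = t * |α 2| := by rw [abs_mul, abs_of_nonneg ht0]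
        rw [h3] at this
        linarith
      refine Or.inl ⟨?_, ?_⟩
      · have := neg_le_abs (gg (p + t • α))
        linarith
      · intro h; rw [h] at habs2; norm_num at habs2

lemma triangle_eq : triangle EE = DD := by
  apply Set.Subset.antisymm
  · rintro p ⟨hpE, hall⟩
    by_contra hpD
    obtain ⟨α, hα, hline⟩ := ruled p hpE hpD
    obtain ⟨w, hw1, hw2⟩ := hall α hα
    exact Set.eq_empty_iff_forall_notMem.1 hline w ⟨hw1, hw2⟩
  · intro p hp
    refine ⟨DD_disjoint_EE p hp, fun α hα => ?_⟩
    obtain ⟨t, _, htE⟩ := trapped p hp α hα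
    exact ⟨p + t • α, ⟨t, rfl⟩, htE⟩

lemma diamond_eq : diamond EE = DD := by
  apply Set.Subset.antisymm
  · rintro p ⟨hpE, hall⟩
    by_contra hpD
    obtain ⟨α, hα, hline⟩ := ruled p hpE hpD
    obtain ⟨w, hw1, hw2⟩ := hall α hα
    obtain ⟨t, _, rfl⟩ := hw1
    exact Set.eq_empty_iff_forall_notMem.1 hline _ ⟨⟨t, rfl⟩, hw2⟩
  · intro p hp
    refine ⟨DD_disjoint_EE p hp, fun α hα => ?_⟩
    obtain ⟨t, ht0, htE⟩ := trapped p hp α hα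
    exact ⟨p + t • α, ⟨t, ht0, rfl⟩, htE⟩

lemma weaklyConvex : WeaklyConvex EE := by
  intro x hx
  rw [isOpen_EE.frontier_eq] at hx
  obtain ⟨hxc, hxE⟩ := hx
  have hxD : x ∉ DD := by
    intro hD
    obtain ⟨w, hw1, hw2⟩ := _root_.mem_closure_iff.1 hxc DD isOpen_DD hD
    exact DD_disjoint_EE w hw1 hw2
  exact ruled x hxE hxD

lemma weaklySemiconvex : WeaklySemiconvex EE := by
  intro x hx
  obtain ⟨α, hα, hline⟩ := weaklyConvex x hx
  refine ⟨α, hα, Set.eq_empty_iff_forall_notMem.2 ?_⟩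
  rintro z ⟨⟨t, _, rfl⟩, hzE⟩
  exact Set.eq_empty_iff_forall_notMem.1 hline _ ⟨⟨t, rfl⟩, hzE⟩

/-- points of `X` from coordinates. -/
def pt (a b c : ℝ) : X :=
  EuclideanSpace.single 0 a + EuclideanSpace.single 1 b + EuclideanSpace.single 2 c

lemma pt_apply0 (a b c : ℝ) : pt a b c 0 = a := by
  simp [pt, PiLp.add_apply, EuclideanSpace.single_apply]

lemma pt_apply1 (a b c : ℝ) : pt a b c 1 = b := by
  simp [pt, PiLp.add_apply, EuclideanSpace.single_apply]

lemma pt_apply2 (a b c : ℝ) : pt a b c 2 = c := by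
  simp [pt, PiLp.add_apply, EuclideanSpace.single_apply]

lemma parab_mem (a : ℝ) : pt a (a ^ 2) 0 ∈ DD := by
  constructor
  · rw [gg, pt_apply1, pt_apply0]
    norm_num
  · rw [pt_apply2]
    norm_num

lemma coord_le_norm (x : X) (i : Fin 3) : |x i| ≤ ‖x‖ := by
  rw [EuclideanSpace.norm_eq, ← Real.sqrt_sq_eq_abs]
  apply Real.sqrt_le_sqrt
  have : ‖x i‖ ^ 2 = (x i) ^ 2 := by simp [Real.norm_eq_abs, sq_abs]
  rw [← this]
  exact Finset.single_le_sum (f := fun j => ‖x j‖ ^ 2) (fun j _ => by positivity)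
    (Finset.mem_univ i)

lemma not_bounded : ¬ Bornology.IsBounded DD := by
  intro h
  obtain ⟨C, hC⟩ := isBounded_iff_forall_norm_le.1 h
  have hmem := parab_mem (|C| + 1)
  have := hC _ hmem
  have h0 := coord_le_norm (pt (|C| + 1) ((|C| + 1) ^ 2) 0) 0
  rw [pt_apply0] at h0
  have h1 : |C| + 1 ≤ |(|C| + 1)| := le_abs_self _
  have h2 : C ≤ |C| := le_abs_self C
  linarith

lemma nonempty_DD : DD.Nonempty := ⟨pt 0 0 0, by simpa using parab_mem 0⟩

/-- The straightening map. -/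
def str (q : X) : X := q + (q 0) ^ 2 • e1x

lemma str_apply0 (q : X) : str q 0 = q 0 := by
  rw [str, apply_add_smul, e1x_apply]; norm_num [Fin.ext_iff]

lemma str_apply1 (q : X) : str q 1 = q 1 + (q 0) ^ 2 := by
  rw [str, apply_add_smul, e1x_apply]; norm_num [Fin.ext_iff]

lemma str_apply2 (q : X) : str q 2 = q 2 := by
  rw [str, apply_add_smul, e1x_apply]; norm_num [Fin.ext_iff]

lemma cont_str : Continuous str := by
  apply continuous_id.add
  exact (((cont_coord 0).pow 2).smul continuous_const)

def SS : Set X := {q | |q 1| < 1 ∧ |q 2| < 1}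

lemma convex_SS : Convex ℝ SS := by
  rintro u ⟨hu1, hu2⟩ v ⟨hv1, hv2⟩ a b ha hb hab
  have key : ∀ i : Fin 3, |u i| < 1 → |v i| < 1 → |(a • u + b • v) i| < 1 := by
    intro i hui hvi
    have : (a • u + b • v) i = a * u i + b * v i := by
      simp [PiLp.add_apply, PiLp.smul_apply, smul_eq_mul]
    rw [this]
    calc |a * u i + b * v i| ≤ |a * u i| + |b * v i| := abs_add_le _ _
      _ = a * |u i| + b * |v i| := by
          rw [abs_mul, abs_mul, abs_of_nonneg ha, abs_of_nonneg hb]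
      _ < 1 := by
          rcases eq_or_lt_of_le ha with h | h
          · have hb1 : b = 1 := by linarith
            rw [← h, hb1]
            simpa using hvi
          · have e1 : a * |u i| < a * 1 := by
              exact mul_lt_mul_of_pos_left hui h
            have e2 : b * |v i| ≤ b * 1 := mul_le_mul_of_nonneg_left hvi.le hb
            nlinarith
  exact ⟨key 1 hu1 hv1, key 2 hu2 hv2⟩

lemma DD_eq_image : DD = str '' SS := by
  ext p
  constructor
  · rintro ⟨h1, h2⟩
    refine ⟨p + (-(p 0) ^ 2) • e1x, ⟨?_, ?_⟩, ?_⟩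
    · have e : (p + (-(p 0) ^ 2) • e1x) 1 = p 1 - (p 0) ^ 2 := by
        rw [apply_add_smul, e1x_apply]; norm_num [Fin.ext_iff]; ring
      rw [e]
      exact h1
    · have e : (p + (-(p 0) ^ 2) • e1x) 2 = p 2 := by
        rw [apply_add_smul, e1x_apply]; norm_num [Fin.ext_iff]
      rw [e]
      exact h2
    · have e0 : (p + (-(p 0) ^ 2) • e1x) 0 = p 0 := by
        rw [apply_add_smul, e1x_apply]; norm_num [Fin.ext_iff]
      have e1 : (p + (-(p 0) ^ 2) • e1x) 1 = p 1 - (p 0) ^ 2 := by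
        rw [apply_add_smul, e1x_apply]; norm_num [Fin.ext_iff]; ring
      have e2 : (p + (-(p 0) ^ 2) • e1x) 2 = p 2 := by
        rw [apply_add_smul, e1x_apply]; norm_num [Fin.ext_iff]
      ext i
      fin_cases i
      · show str _ 0 = p 0
        rw [str_apply0, e0]
      · show str _ 1 = p 1
        rw [str_apply1, e0, e1]; ring
      · show str _ 2 = p 2
        rw [str_apply2, e2]
  · rintro ⟨q, ⟨hq1, hq2⟩, rfl⟩
    constructor
    · rw [gg, str_apply1, str_apply0]
      simpa using hq1
    · rw [str_apply2]
      exact hq2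

lemma nonempty_SS : SS.Nonempty := by
  refine ⟨0, ?_, ?_⟩ <;> simp

lemma connected_DD : IsConnected DD := by
  rw [DD_eq_image]
  exact (IsConnected.image ⟨nonempty_SS, convex_SS.isPreconnected⟩ str
    cont_str.continuousOn)

lemma not_convex_DD : ¬ Convex ℝ DD := by
  intro hC
  have hu := parab_mem 2
  have hv := parab_mem (-2)
  have hmid := hC hu hv (by norm_num : (0:ℝ) ≤ 1/2) (by norm_num : (0:ℝ) ≤ 1/2) (by norm_num)
  obtain ⟨hm1, _⟩ := hmid
  have key : ∀ i : Fin 3, ((1/2 : ℝ) • pt 2 (2 ^ 2) 0 + (1/2 : ℝ) • pt (-2) ((-2) ^ 2) 0) i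
      = (1/2 : ℝ) * pt 2 (2 ^ 2) 0 i + (1/2 : ℝ) * pt (-2) ((-2) ^ 2) 0 i := by
    intro i
    simp [PiLp.add_apply, PiLp.smul_apply, smul_eq_mul]
  have e0 := key 0
  have e1 := key 1
  rw [pt_apply0, pt_apply0] at e0
  rw [pt_apply1, pt_apply1] at e1
  rw [gg, e0, e1] at hm1
  norm_num at hm1

end

end UnboundedExample

theorem exists_unbounded_nonconvex_example :
    ∃ E : Set (EuclideanSpace ℝ (Fin 3)), IsOpen E ∧ WeaklyConvex E ∧ WeaklySemiconvex E ∧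
      triangle E = diamond E ∧ (triangle E).Nonempty ∧
      ¬ Bornology.IsBounded (triangle E) ∧ IsConnected (triangle E) ∧
      ¬ Convex ℝ (triangle E) := by
  refine ⟨UnboundedExample.EE, UnboundedExample.isOpen_EE, UnboundedExample.weaklyConvex,
    UnboundedExample.weaklySemiconvex, ?_, ?_, ?_, ?_, ?_⟩ <;>
    rw [UnboundedExample.triangle_eq]
  · rw [UnboundedExample.diamond_eq]
  · exact UnboundedExample.nonempty_DD
  · exact UnboundedExample.not_bounded
  · exact UnboundedExample.connected_DD
  · exact UnboundedExample.not_convex_DD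
end

section
/- Let E^{n-1} ⊆ ℝ^{n-1} be an open weakly 1-convex and weakly 1-semiconvex set with P := (E^{n-1})^◇ = (E^{n-1})^△ ≠ ∅, let D^{n-1} be the convex hull of E^{n-1}, and set Eⁿ := (D^{n-1} × (-3/2, -1)) ∪ (E^{n-1} × (-1, 1)) ∪ (D^{n-1} × (1, 3/2)) ⊆ ℝⁿ. Then Eⁿ is weakly 1-convex and weakly 1-semiconvex, and (Eⁿ)^△ = (Eⁿ)^◇ = P × (-1, 1). -/
open Set Metric

/-- The closed ray with endpoint `x` in direction `α` (in any real vector space). -/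
def rayV {V : Type*} [AddCommGroup V] [Module ℝ V] (x α : V) : Set V :=
  {z | ∃ t : ℝ, 0 ≤ t ∧ z = x + t • α}

/-- The straight line through `x` in direction `α`. -/
def lineV {V : Type*} [AddCommGroup V] [Module ℝ V] (x α : V) : Set V :=
  {z | ∃ t : ℝ, z = x + t • α}

/-- The set `E^◇` of 1-nonsemiconvexity points of `E`. -/
def diamondV {V : Type*} [AddCommGroup V] [Module ℝ V] (E : Set V) : Set V :=
  {x | x ∉ E ∧ ∀ α : V, α ≠ 0 → (rayV x α ∩ E).Nonempty}

/-- The set `E^△` of 1-nonconvexity points of `E`. -/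
def triangleV {V : Type*} [AddCommGroup V] [Module ℝ V] (E : Set V) : Set V :=
  {x | x ∉ E ∧ ∀ α : V, α ≠ 0 → (lineV x α ∩ E).Nonempty}

/-- Weak 1-semiconvexity of an open set. -/
def WeaklySemiconvexV {V : Type*} [AddCommGroup V] [Module ℝ V] [TopologicalSpace V]
    (E : Set V) : Prop :=
  ∀ x ∈ frontier E, ∃ α : V, α ≠ 0 ∧ rayV x α ∩ E = ∅

/-- Weak 1-convexity of an open set. -/
def WeaklyConvexV {V : Type*} [AddCommGroup V] [Module ℝ V] [TopologicalSpace V]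
    (E : Set V) : Prop :=
  ∀ x ∈ frontier E, ∃ α : V, α ≠ 0 ∧ lineV x α ∩ E = ∅



private lemma isOpen_convexHull' {V : Type*} [AddCommGroup V] [Module ℝ V]
    [TopologicalSpace V] [IsTopologicalAddGroup V] [ContinuousSMul ℝ V]
    {E : Set V} (hE : IsOpen E) : IsOpen (convexHull ℝ E) := by
  have h : convexHull ℝ E ⊆ interior (convexHull ℝ E) :=
    convexHull_min (hE.subset_interior_iff.mpr (subset_convexHull ℝ E))
      (convex_convexHull ℝ E).interior
  rw [h.antisymm interior_subset]
  exact isOpen_interior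

private lemma exists_ne_zero_ker {m : ℕ} (hm : 2 ≤ m)
    (f : EuclideanSpace ℝ (Fin m) →L[ℝ] ℝ) :
    ∃ a : EuclideanSpace ℝ (Fin m), a ≠ 0 ∧ f a = 0 := by
  have h0 : (0 : ℕ) < m := by omega
  have h1 : (1 : ℕ) < m := by omega
  set i0 : Fin m := ⟨0, h0⟩
  set i1 : Fin m := ⟨1, h1⟩
  have h01 : i1 ≠ i0 := by simp [i0, i1, Fin.ext_iff]
  set e0 : EuclideanSpace ℝ (Fin m) := EuclideanSpace.single i0 1 with he0
  set e1 : EuclideanSpace ℝ (Fin m) := EuclideanSpace.single i1 1 with he1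
  by_cases hf0 : f e0 = 0
  · refine ⟨e0, ?_, hf0⟩
    intro h
    have := congrArg (fun v => v i0) h
    simp [he0, EuclideanSpace.single_apply] at this
  · refine ⟨f e0 • e1 - f e1 • e0, ?_, by simp [map_sub, map_smul]; ring⟩
    intro h
    have := congrArg (fun v => v i1) h
    simp [he0, he1, EuclideanSpace.single_apply, h01] at this
    exact hf0 this

private lemma sep_line {m : ℕ} (hm : 2 ≤ m) {D : Set (EuclideanSpace ℝ (Fin m))}
    (hDc : Convex ℝ D) (hDo : IsOpen D) {x : EuclideanSpace ℝ (Fin m)} (hx : x ∉ D) :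
    ∃ a : EuclideanSpace ℝ (Fin m), a ≠ 0 ∧ ∀ t : ℝ, x + t • a ∉ D := by
  obtain ⟨f, hf⟩ := geometric_hahn_banach_open_point hDc hDo hx
  obtain ⟨a, ha, hfa⟩ := exists_ne_zero_ker hm f
  refine ⟨a, ha, fun t hmem => ?_⟩
  have := hf _ hmem
  simp [map_add, map_smul, hfa] at this

private lemma reach_layer {V : Type*} [NormedAddCommGroup V] [NormedSpace ℝ V]
    {D : Set V} (hDo : IsOpen D) (hDc : Convex ℝ D)
    {x a : V} (ha : a ≠ 0) (hx : x ∈ D) {t₀ : ℝ} (ht₀ : 0 ≤ t₀) (hy : x + t₀ • a ∈ D)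
    {c s u v : ℝ} (huv : u < v) (hsu : s < u) (h1 : u ≤ s + t₀ * c) :
    ∃ t : ℝ, 0 ≤ t ∧ x + t • a ∈ D ∧ u < s + t * c ∧ s + t * c < v := by
  have htc : 0 < t₀ * c := by linarith
  have ht₀' : 0 < t₀ := by
    rcases ht₀.lt_or_eq with h | h
    · exact h
    · exfalso; rw [← h] at htc; simp at htc
  have hc : 0 < c := by nlinarith
  obtain ⟨ε, hε, hball⟩ := Metric.isOpen_iff.mp hDo _ hy
  have hna : 0 < ‖a‖ := norm_pos_iff.mpr ha
  set δ := ε / (2 * ‖a‖) with hδdef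
  have hδ : 0 < δ := by positivity
  set μ := min δ ((v - u)/(2*c)) with hμdef
  have hμpos : 0 < μ := lt_min hδ (div_pos (by linarith) (by positivity))
  have hμδ : μ ≤ δ := min_le_left _ _
  have hμr : μ ≤ (v - u)/(2*c) := min_le_right _ _
  clear_value δ μ
  obtain ⟨t₁, ht₁def⟩ : ∃ t₁ : ℝ, t₁ = (u - s)/c + μ := ⟨_, rfl⟩
  have hstar_pos : 0 < (u - s)/c := div_pos (by linarith) hc
  have hstar_le : (u - s)/c ≤ t₀ := by rw [div_le_iff₀ hc]; linarith
  have ht₁pos : 0 < t₁ := by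
    have : 0 < (u - s)/c := div_pos (by linarith) hc
    linarith
  have ht₁c : t₁ * c = (u - s) + μ * c := by
    rw [ht₁def, add_mul, div_mul_cancel₀ _ hc.ne']
  have hμc1 : 0 < μ * c := by positivity
  have hμc2 : μ * c ≤ (v - u)/2 := by
    calc μ * c ≤ ((v - u)/(2*c)) * c := mul_le_mul_of_nonneg_right hμr hc.le
      _ = (v - u)/2 := by field_simp
  refine ⟨t₁, ht₁pos.le, ?_, by nlinarith, by nlinarith⟩
  by_cases hle : t₁ ≤ t₀
  · have hcomb := hDc hx hy (a := 1 - t₁/t₀) (b := t₁/t₀)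
      (by rw [sub_nonneg, div_le_one ht₀']; exact hle)
      (by positivity) (by ring)
    have heq : (1 - t₁/t₀) • x + (t₁/t₀) • (x + t₀ • a) = x + t₁ • a := by
      match_scalars <;> field_simp <;> ring
    rwa [heq] at hcomb
  · apply hball
    rw [mem_ball, dist_eq_norm]
    have heq : x + t₁ • a - (x + t₀ • a) = (t₁ - t₀) • a := by module
    rw [heq, norm_smul, Real.norm_eq_abs]
    have h2 : t₁ - t₀ ≤ δ := by linarith [hstar_le]
    have h3 : 0 < t₁ - t₀ := by linarith
    rw [abs_of_pos h3]
    calc (t₁ - t₀) * ‖a‖ ≤ δ * ‖a‖ := mul_le_mul_of_nonneg_right h2 hna.le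
      _ = ε / 2 := by rw [hδdef]; field_simp
      _ < ε := by linarith

theorem product_construction {m : ℕ} (hm : 2 ≤ m)
    (E : Set (EuclideanSpace ℝ (Fin m))) (hE : IsOpen E)
    (hwc : WeaklyConvexV E) (hws : WeaklySemiconvexV E)
    (P : Set (EuclideanSpace ℝ (Fin m)))
    (hPd : P = diamondV E) (hPt : P = triangleV E) (hPne : P.Nonempty)
    (D : Set (EuclideanSpace ℝ (Fin m))) (hD : D = convexHull ℝ E)
    (En : Set (EuclideanSpace ℝ (Fin m) × ℝ))
    (hEn : En = (D ×ˢ Ioo (-(3/2) : ℝ) (-1)) ∪ (E ×ˢ Ioo (-1 : ℝ) 1) ∪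
        (D ×ˢ Ioo (1 : ℝ) (3/2))) :
    WeaklyConvexV En ∧ WeaklySemiconvexV En ∧
      triangleV En = P ×ˢ Ioo (-1 : ℝ) 1 ∧ diamondV En = P ×ˢ Ioo (-1 : ℝ) 1 := by
  classical
  have hDo : IsOpen D := by rw [hD]; exact isOpen_convexHull' hE
  have hDc : Convex ℝ D := by rw [hD]; exact convex_convexHull ℝ E
  have hED : E ⊆ D := by rw [hD]; exact subset_convexHull ℝ E
  have hEno : IsOpen En := by
    rw [hEn]
    exact ((hDo.prod isOpen_Ioo).union (hE.prod isOpen_Ioo)).union (hDo.prod isOpen_Ioo)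
  have hmem : ∀ z : EuclideanSpace ℝ (Fin m) × ℝ, z ∈ En ↔
      (z.1 ∈ D ∧ z.2 ∈ Ioo (-(3/2) : ℝ) (-1)) ∨ (z.1 ∈ E ∧ z.2 ∈ Ioo (-1 : ℝ) 1) ∨
      (z.1 ∈ D ∧ z.2 ∈ Ioo (1 : ℝ) (3/2)) := by
    intro z; rw [hEn]; simp only [Set.mem_union, Set.mem_prod]; tauto
  have ha0 : ∃ a : EuclideanSpace ℝ (Fin m), a ≠ 0 := by
    refine ⟨EuclideanSpace.single ⟨0, by omega⟩ 1, fun h => ?_⟩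
    have := congrArg (fun v => v (⟨0, by omega⟩ : Fin m)) h
    simp [EuclideanSpace.single_apply] at this
  have hne0 : ∀ (a : EuclideanSpace ℝ (Fin m)) (c : ℝ), a ≠ 0 →
      ((a, c) : EuclideanSpace ℝ (Fin m) × ℝ) ≠ 0 :=
    fun a c ha h => ha (congrArg Prod.fst h)
  have hpt : ∀ (x : EuclideanSpace ℝ (Fin m)) (s t : ℝ) (a : EuclideanSpace ℝ (Fin m)) (c : ℝ),
      ((x, s) : EuclideanSpace ℝ (Fin m) × ℝ) + t • (a, c) = (x + t • a, s + t * c) := by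
    intros; rfl
  have hPD : P ⊆ D := by
    intro x hx
    by_contra hxD
    obtain ⟨a, ha, hline⟩ := sep_line hm hDc hDo hxD
    rw [hPd] at hx
    obtain ⟨z, hzl, hzE⟩ := hx.2 a ha
    obtain ⟨t, ht, rfl⟩ := hzl
    exact hline t (hED hzE)
  -- triangleV En ⊆ P ×ˢ Ioo (-1) 1
  have hTsub : triangleV En ⊆ P ×ˢ Ioo (-1 : ℝ) 1 := by
    rintro ⟨x, s⟩ ⟨hnm, hl⟩
    have hxD : x ∈ D := by
      by_contra hxD
      obtain ⟨a, ha, hmiss⟩ := sep_line hm hDc hDo hxD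
      obtain ⟨z, hzl, hzEn⟩ := hl (a, 0) (hne0 a 0 ha)
      obtain ⟨t, rfl⟩ := hzl
      rw [hpt, hmem] at hzEn
      rcases hzEn with ⟨h, _⟩ | ⟨h, _⟩ | ⟨h, _⟩
      exacts [hmiss t h, hmiss t (hED h), hmiss t h]
    have hs1 : s ∈ Ioo (-1 : ℝ) 1 := by
      by_contra hs
      have h2 : s ∉ Ioo (-(3/2) : ℝ) (-1) := fun h => hnm ((hmem _).mpr (Or.inl ⟨hxD, h⟩))
      have h3 : s ∉ Ioo (1 : ℝ) (3/2) := fun h => hnm ((hmem _).mpr (Or.inr (Or.inr ⟨hxD, h⟩)))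
      obtain ⟨a, ha⟩ := ha0
      obtain ⟨z, hzl, hzEn⟩ := hl (a, 0) (hne0 a 0 ha)
      obtain ⟨t, rfl⟩ := hzl
      rw [hpt] at hzEn
      rw [hmem] at hzEn
      simp only [mul_zero, add_zero] at hzEn
      rcases hzEn with ⟨_, h⟩ | ⟨_, h⟩ | ⟨_, h⟩
      exacts [h2 h, hs h, h3 h]
    have hxE : x ∉ E := fun h => hnm ((hmem _).mpr (Or.inr (Or.inl ⟨h, hs1⟩)))
    refine ⟨?_, hs1⟩
    rw [hPt]
    refine ⟨hxE, fun a ha => ?_⟩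
    obtain ⟨z, hzl, hzEn⟩ := hl (a, 0) (hne0 a 0 ha)
    obtain ⟨t, rfl⟩ := hzl
    rw [hpt] at hzEn
    rw [hmem] at hzEn
    simp only [mul_zero, add_zero] at hzEn
    rcases hzEn with ⟨_, h⟩ | ⟨h, _⟩ | ⟨_, h⟩
    · exact absurd hs1.1 (asymm h.2)
    · exact ⟨x + t • a, ⟨t, rfl⟩, h⟩
    · exact absurd hs1.2 (asymm h.1)
  -- P ×ˢ Ioo (-1) 1 ⊆ diamondV En
  have hPsub : P ×ˢ Ioo (-1 : ℝ) 1 ⊆ diamondV En := by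
    rintro ⟨x, s⟩ ⟨hxP, hs⟩
    have hxd : x ∈ diamondV E := hPd ▸ hxP
    have hxD : x ∈ D := hPD hxP
    refine ⟨?_, ?_⟩
    · rw [hmem]
      rintro (⟨_, h⟩ | ⟨h, _⟩ | ⟨_, h⟩)
      · exact absurd hs.1 (asymm h.2)
      · exact hxd.1 h
      · exact absurd hs.2 (asymm h.1)
    · rintro ⟨a, c⟩ hα
      by_cases ha : a = 0
      · subst ha
        have hc : c ≠ 0 := fun h => hα (by rw [h]; rfl)
        rcases hc.lt_or_gt with hc' | hc'
        · refine ⟨(x, s) + ((-5/4 - s)/c) • ((0 : EuclideanSpace ℝ (Fin m)), c),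
            ⟨_, (div_pos_of_neg_of_neg (by linarith [hs.1]) hc').le, rfl⟩, ?_⟩
          rw [hpt, hmem]
          have hv : s + (-5/4 - s)/c * c = -5/4 := by field_simp; ring
          refine Or.inl ⟨by simpa using hxD, ?_⟩
          rw [hv]
          constructor <;> norm_num
        · refine ⟨(x, s) + ((5/4 - s)/c) • ((0 : EuclideanSpace ℝ (Fin m)), c),
            ⟨_, (div_pos (by linarith [hs.2]) hc').le, rfl⟩, ?_⟩
          rw [hpt, hmem]
          have hv : s + (5/4 - s)/c * c = 5/4 := by field_simp; ring
          refine Or.inr (Or.inr ⟨by simpa using hxD, ?_⟩)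
          rw [hv]
          constructor <;> norm_num
      · obtain ⟨y, hyl, hyE⟩ := hxd.2 a ha
        obtain ⟨t₀, ht₀, rfl⟩ := hyl
        by_cases hmid : s + t₀ * c ∈ Ioo (-1 : ℝ) 1
        · exact ⟨(x, s) + t₀ • (a, c), ⟨t₀, ht₀, rfl⟩,
            (hmem _).mpr (Or.inr (Or.inl (by rw [hpt]; exact ⟨hyE, hmid⟩)))⟩
        · simp only [Set.mem_Ioo, not_and_or, not_lt] at hmid
          rcases hmid with hlow | hhigh
          · obtain ⟨t, ht, hD', hgt, hlt⟩ := reach_layer hDo hDc ha hxD ht₀ (hED hyE)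
              (c := -c) (s := -s) (u := 1) (v := 3/2) (by norm_num) (by linarith [hs.1])
              (by have h' : -s + t₀ * -c = -(s + t₀ * c) := by ring
                  linarith)
            have hneg : -s + t * -c = -(s + t * c) := by ring
            refine ⟨(x, s) + t • (a, c), ⟨t, ht, rfl⟩, (hmem _).mpr (Or.inl ?_)⟩
            rw [hpt]
            have hIoo : (-(3/2) : ℝ) < s + t * c ∧ s + t * c < -1 := ⟨by linarith, by linarith⟩
            exact ⟨hD', hIoo.1, hIoo.2⟩
          · obtain ⟨t, ht, hD', hgt, hlt⟩ := reach_layer hDo hDc ha hxD ht₀ (hED hyE)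
              (c := c) (s := s) (u := 1) (v := 3/2) (by norm_num) (by linarith [hs.2]) (by linarith)
            refine ⟨(x, s) + t • (a, c), ⟨t, ht, rfl⟩, (hmem _).mpr (Or.inr (Or.inr ?_))⟩
            rw [hpt]
            exact ⟨hD', hgt, hlt⟩
  -- frontier analysis
  have hclos : closure En ⊆ (closure D ×ˢ Icc (-(3/2) : ℝ) (-1)) ∪
      (closure E ×ˢ Icc (-1 : ℝ) 1) ∪ (closure D ×ˢ Icc (1 : ℝ) (3/2)) := by
    rw [hEn, closure_union, closure_union, closure_prod_eq, closure_prod_eq, closure_prod_eq,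
      closure_Ioo (by norm_num : (-(3/2) : ℝ) ≠ -1), closure_Ioo (by norm_num : (-1 : ℝ) ≠ 1),
      closure_Ioo (by norm_num : (1 : ℝ) ≠ 3/2)]
  have hmain : ∀ (x : EuclideanSpace ℝ (Fin m)) (s : ℝ), (x, s) ∈ frontier En →
      (s ∈ Ioo (-1 : ℝ) 1 ∧ x ∈ frontier E) ∨
      (∃ a : EuclideanSpace ℝ (Fin m), a ≠ 0 ∧ ∀ t : ℝ, x + t • a ∉ D) ∨
      (∀ y : EuclideanSpace ℝ (Fin m), (y, s) ∉ En) := by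
    intro x s hz
    have hzc : (x, s) ∈ closure En := hz.1
    have hzn : (x, s) ∉ En := fun h => hz.2 (hEno.interior_eq.symm ▸ h)
    by_cases hmid : s ∈ Ioo (-1 : ℝ) 1
    · left
      refine ⟨hmid, ?_, fun h => ?_⟩
      · rcases hclos hzc with (⟨h, hs'⟩ | ⟨h, hs'⟩) | ⟨h, hs'⟩
        · exact absurd hmid.1 (not_lt.mpr hs'.2)
        · exact h
        · exact absurd hmid.2 (not_lt.mpr hs'.1)
      · exact hzn ((hmem _).mpr (Or.inr (Or.inl ⟨hE.interior_eq ▸ h, hmid⟩)))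
    · by_cases houter : s ∈ Ioo (-(3/2) : ℝ) (-1) ∨ s ∈ Ioo (1 : ℝ) (3/2)
      · right; left
        have hxD : x ∉ D := fun h => hzn ((hmem _).mpr (by
          rcases houter with h' | h'
          exacts [Or.inl ⟨h, h'⟩, Or.inr (Or.inr ⟨h, h'⟩)]))
        exact sep_line hm hDc hDo hxD
      · right; right
        push_neg at houter
        intro y hy
        rw [hmem] at hy
        rcases hy with ⟨_, h⟩ | ⟨_, h⟩ | ⟨_, h⟩
        exacts [houter.1 h, hmid h, houter.2 h]
  have hwcEn : WeaklyConvexV En := by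
    rintro ⟨x, s⟩ hz
    rcases hmain x s hz with ⟨hmid, hxfr⟩ | ⟨a, ha, hmiss⟩ | hempty
    · obtain ⟨a, ha, hmiss⟩ := hwc x hxfr
      refine ⟨(a, 0), hne0 a 0 ha, ?_⟩
      rw [Set.eq_empty_iff_forall_notMem]
      rintro z ⟨hzl, hzEn⟩
      obtain ⟨t, rfl⟩ := hzl
      rw [hpt] at hzEn
      rw [hmem] at hzEn
      simp only [mul_zero, add_zero] at hzEn
      rcases hzEn with ⟨_, h⟩ | ⟨h, _⟩ | ⟨_, h⟩
      · exact absurd hmid.1 (asymm h.2)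
      · exact (Set.eq_empty_iff_forall_notMem.mp hmiss) _ ⟨⟨t, rfl⟩, h⟩
      · exact absurd hmid.2 (asymm h.1)
    · refine ⟨(a, 0), hne0 a 0 ha, ?_⟩
      rw [Set.eq_empty_iff_forall_notMem]
      rintro z ⟨hzl, hzEn⟩
      obtain ⟨t, rfl⟩ := hzl
      rw [hpt] at hzEn
      rw [hmem] at hzEn
      rcases hzEn with ⟨h, _⟩ | ⟨h, _⟩ | ⟨h, _⟩
      exacts [hmiss t h, hmiss t (hED h), hmiss t h]
    · obtain ⟨a, ha⟩ := ha0
      refine ⟨(a, 0), hne0 a 0 ha, ?_⟩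
      rw [Set.eq_empty_iff_forall_notMem]
      rintro z ⟨hzl, hzEn⟩
      obtain ⟨t, rfl⟩ := hzl
      rw [hpt] at hzEn
      simp only [mul_zero, add_zero] at hzEn
      exact hempty _ hzEn
  have hwsEn : WeaklySemiconvexV En := by
    rintro ⟨x, s⟩ hz
    rcases hmain x s hz with ⟨hmid, hxfr⟩ | ⟨a, ha, hmiss⟩ | hempty
    · obtain ⟨a, ha, hmiss⟩ := hws x hxfr
      refine ⟨(a, 0), hne0 a 0 ha, ?_⟩
      rw [Set.eq_empty_iff_forall_notMem]
      rintro z ⟨hzl, hzEn⟩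
      obtain ⟨t, ht, rfl⟩ := hzl
      rw [hpt] at hzEn
      rw [hmem] at hzEn
      simp only [mul_zero, add_zero] at hzEn
      rcases hzEn with ⟨_, h⟩ | ⟨h, _⟩ | ⟨_, h⟩
      · exact absurd hmid.1 (asymm h.2)
      · exact (Set.eq_empty_iff_forall_notMem.mp hmiss) _ ⟨⟨t, ht, rfl⟩, h⟩
      · exact absurd hmid.2 (asymm h.1)
    · refine ⟨(a, 0), hne0 a 0 ha, ?_⟩
      rw [Set.eq_empty_iff_forall_notMem]
      rintro z ⟨hzl, hzEn⟩
      obtain ⟨t, ht, rfl⟩ := hzl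
      rw [hpt] at hzEn
      rw [hmem] at hzEn
      rcases hzEn with ⟨h, _⟩ | ⟨h, _⟩ | ⟨h, _⟩
      exacts [hmiss t h, hmiss t (hED h), hmiss t h]
    · obtain ⟨a, ha⟩ := ha0
      refine ⟨(a, 0), hne0 a 0 ha, ?_⟩
      rw [Set.eq_empty_iff_forall_notMem]
      rintro z ⟨hzl, hzEn⟩
      obtain ⟨t, ht, rfl⟩ := hzl
      rw [hpt] at hzEn
      simp only [mul_zero, add_zero] at hzEn
      exact hempty _ hzEn
  have hdt : diamondV En ⊆ triangleV En := by
    rintro z ⟨h1, h2⟩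
    refine ⟨h1, fun α hα => ?_⟩
    obtain ⟨w, hwl, hwE⟩ := h2 α hα
    obtain ⟨t, ht, rfl⟩ := hwl
    exact ⟨_, ⟨t, rfl⟩, hwE⟩
  exact ⟨hwcEn, hwsEn, hTsub.antisymm (hPsub.trans hdt),
    (hdt.trans hTsub).antisymm hPsub⟩
end

section
/- Let D ⊆ ℝ² be an open bounded convex set, P an open convex polygon with closure(P) ⊆ D, and let γ¹, …, γᵏ be the straight lines containing the sides of P. Then the set E := (D \ closure(P)) \ (γ¹ ∪ … ∪ γᵏ) is open, weakly 1-convex and weakly 1-semiconvex, and E^◇ = E^△ = P. -/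
open Set Metric

lemma exists_unit_ker (g : EuclideanSpace ℝ (Fin 2) →ₗ[ℝ] ℝ) (hg : ∃ v, g v ≠ 0) :
    ∃ α : EuclideanSpace ℝ (Fin 2), ‖α‖ = 1 ∧ g α = 0 := by
  set e0 : EuclideanSpace ℝ (Fin 2) := EuclideanSpace.single 0 1 with he0
  set e1 : EuclideanSpace ℝ (Fin 2) := EuclideanSpace.single 1 1 with he1
  set β : EuclideanSpace ℝ (Fin 2) := g e1 • e0 - g e0 • e1 with hβ
  have hβg : g β = 0 := by simp [hβ]; ring
  have hrep : ∀ v : EuclideanSpace ℝ (Fin 2), v = v 0 • e0 + v 1 • e1 := by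
    intro v
    refine PiLp.ext fun j => ?_
    fin_cases j <;> simp [he0, he1, EuclideanSpace.single_apply]
  have hβne : β ≠ 0 := by
    intro h
    obtain ⟨v, hv⟩ := hg
    have h1 : g e1 = 0 := by
      have := congrArg (fun w => w 0) h
      simpa [hβ, he0, he1, EuclideanSpace.single_apply] using this
    have h0 : g e0 = 0 := by
      have := congrArg (fun w => w 1) h
      simpa [hβ, he0, he1, EuclideanSpace.single_apply] using this
    apply hv
    rw [hrep v, map_add, map_smul, map_smul, h0, h1]
    simp
  refine ⟨‖β‖⁻¹ • β, ?_, by simp [hβg]⟩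
  rw [norm_smul, norm_inv, norm_norm, inv_mul_cancel₀ (norm_ne_zero_iff.2 hβne)]


/-- `P` is an open convex polygon in the plane, presented as a bounded nonempty
intersection of finitely many open half-planes `{x | f i x < c i}`, each of whose
boundary lines `{x | f i x = c i}` contains a side (a nondegenerate segment) of `P`. -/
theorem polygon_cut_example {k : ℕ}
    (D : Set (EuclideanSpace ℝ (Fin 2)))
    (hDopen : IsOpen D) (hDbdd : Bornology.IsBounded D) (hDconv : Convex ℝ D)
    (f : Fin k → (EuclideanSpace ℝ (Fin 2) →ₗ[ℝ] ℝ)) (c : Fin k → ℝ)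
    (hf : ∀ i, f i ≠ 0)
    (P : Set (EuclideanSpace ℝ (Fin 2)))
    (hP : P = ⋂ i, {x | f i x < c i})
    (hPbdd : Bornology.IsBounded P) (hPne : P.Nonempty)
    (hside : ∀ i, ∃ x y : EuclideanSpace ℝ (Fin 2), x ≠ y ∧
      x ∈ closure P ∧ y ∈ closure P ∧ f i x = c i ∧ f i y = c i)
    (hPD : closure P ⊆ D)
    (E : Set (EuclideanSpace ℝ (Fin 2)))
    (hE : E = (D \ closure P) \ ⋃ i, {x | f i x = c i}) :
    IsOpen E ∧ WeaklyConvex E ∧ WeaklySemiconvex E ∧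
      diamond E = P ∧ triangle E = P := by
  have hfC : ∀ i, Continuous (f i) := fun i => (f i).continuous_of_finiteDimensional
  have hclosedLines : IsClosed (⋃ i, {x : EuclideanSpace ℝ (Fin 2) | f i x = c i}) :=
    isClosed_iUnion_of_finite fun i => isClosed_eq (hfC i) continuous_const
  have hQ : ∀ i, closure P ⊆ {x | f i x ≤ c i} := fun i =>
    closure_minimal (by rw [hP]; exact fun x hx => le_of_lt (show f i x < c i from mem_iInter.1 hx i))
      (isClosed_le (hfC i) continuous_const)
  have hEopen : IsOpen E := by
    rw [hE]
    exact (hDopen.sdiff isClosed_closure).sdiff hclosedLines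
  -- the key lemma: through any point not in E and not in P there is a line missing E
  have key : ∀ x, x ∉ E → x ∉ P → ∃ α : EuclideanSpace ℝ (Fin 2),
      ‖α‖ = 1 ∧ line x α ∩ E = ∅ := by
    intro x hxE hxP
    by_cases hxD : x ∈ D
    · by_cases hxl : ∃ i, f i x = c i
      · obtain ⟨i, hi⟩ := hxl
        obtain ⟨α, hα1, hα0⟩ := exists_unit_ker (f i) (by
          by_contra hcon
          push_neg at hcon
          exact hf i (LinearMap.ext fun v => hcon v))
        refine ⟨α, hα1, eq_empty_iff_forall_notMem.2 ?_⟩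
        rintro z ⟨⟨t, rfl⟩, hzE⟩
        rw [hE] at hzE
        exact hzE.2 (mem_iUnion.2 ⟨i, by simp [map_add, map_smul, hα0, hi]⟩)
      · push_neg at hxl
        by_cases hlt : ∀ i, f i x < c i
        · exact absurd (hP ▸ mem_iInter.2 fun i => hlt i) hxP
        · exfalso
          apply hxE
          rw [hE]
          push_neg at hlt
          obtain ⟨i, hi⟩ := hlt
          refine ⟨⟨hxD, fun hc => ?_⟩, fun hc => ?_⟩
          · exact absurd (hQ i hc) (not_le.2 (lt_of_le_of_ne hi (Ne.symm (hxl i))))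
          · obtain ⟨j, hj⟩ := mem_iUnion.1 hc
            exact hxl j hj
    · obtain ⟨g, hg⟩ := geometric_hahn_banach_open_point hDconv hDopen hxD
      obtain ⟨p, hp⟩ := hPne
      have hpD : p ∈ D := hPD (subset_closure hp)
      obtain ⟨α, hα1, hα0⟩ := exists_unit_ker g.toLinearMap
        ⟨x - p, by
          have h := hg p hpD
          have h2 : g.toLinearMap (x - p) = g x - g p := by simp
          rw [h2]
          exact sub_ne_zero_of_ne (ne_of_gt h)⟩
      refine ⟨α, hα1, eq_empty_iff_forall_notMem.2 ?_⟩
      rintro z ⟨⟨t, rfl⟩, hzE⟩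
      have hzD : x + t • α ∈ D := by rw [hE] at hzE; exact hzE.1.1
      have := hg _ hzD
      have hga : g α = 0 := hα0
      have hgz : g (x + t • α) = g x := by simp [map_add, map_smul, hga]
      linarith [hg _ hzD, hgz.le]
  -- P is open and disjoint from E
  have hPopen : IsOpen P := by
    rw [hP]
    exact isOpen_iInter_of_finite fun i => isOpen_lt (hfC i) continuous_const
  have hPE : Disjoint P E := by
    rw [Set.disjoint_left]
    intro a haP haE
    rw [hE] at haE
    exact haE.1.2 (subset_closure haP)
  -- weak convexity
  have hWC : WeaklyConvex E := by
    intro x hx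
    rw [hEopen.frontier_eq] at hx
    have hxP : x ∉ P :=
      fun hxp => ((hPE.closure_right hPopen).le_bot ⟨hxp, hx.1⟩ : False)
    exact key x hx.2 hxP
  -- weak semiconvexity follows
  have hWS : WeaklySemiconvex E := by
    intro x hx
    obtain ⟨α, hα1, hα2⟩ := hWC x hx
    refine ⟨α, hα1, eq_empty_iff_forall_notMem.2 ?_⟩
    rintro z ⟨⟨t, _, rfl⟩, hzE⟩
    exact eq_empty_iff_forall_notMem.1 hα2 _ ⟨⟨t, rfl⟩, hzE⟩
  -- P ⊆ diamond E
  have hPd : P ⊆ diamond E := by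
    intro x hx
    refine ⟨fun hxE => hPE.le_bot ⟨hx, hxE⟩, ?_⟩
    intro α hα
    set S : Set ℝ := {t : ℝ | 0 ≤ t ∧ x + t • α ∈ closure P} with hS
    have hS0 : (0 : ℝ) ∈ S := ⟨le_refl 0, by simpa using subset_closure hx⟩
    obtain ⟨R, hR⟩ := isBounded_iff_forall_norm_le.1 hPbdd.closure
    have hSbdd : BddAbove S := by
      refine ⟨R + ‖x‖, fun t ht => ?_⟩
      have h1 : ‖x + t • α‖ ≤ R := hR _ ht.2
      have h2 : ‖t • α‖ ≤ ‖x + t • α‖ + ‖x‖ := by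
        have := norm_sub_le (x + t • α) x
        simpa using this
      have h3 : ‖t • α‖ = t := by
        rw [norm_smul, hα, mul_one, Real.norm_eq_abs, abs_of_nonneg ht.1]
      linarith
    have hSclosed : IsClosed S := by
      have : S = Ici 0 ∩ (fun t : ℝ => x + t • α) ⁻¹' closure P := by
        ext t; simp [hS, mem_Ici]
      rw [this]
      exact isClosed_Ici.inter (IsClosed.preimage
        (continuous_const.add (continuous_id.smul continuous_const)) isClosed_closure)
    set T := sSup S with hT
    have hTS : T ∈ S := hSclosed.csSup_mem ⟨0, hS0⟩ hSbdd
    have hT0 : 0 ≤ T := hTS.1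
    have hTD : x + T • α ∈ D := hPD hTS.2
    obtain ⟨ε, hε, hball⟩ := Metric.isOpen_iff.1 hDopen _ hTD
    -- bad parameters where the line meets one of the k lines
    set B : Set ℝ := ⋃ i, {t : ℝ | f i (x + t • α) = c i} with hB
    have hBfin : B.Finite := by
      refine Set.finite_iUnion fun i => ?_
      by_cases hia : f i α = 0
      · have : {t : ℝ | f i (x + t • α) = c i} = ∅ := by
          ext t
          simp only [mem_setOf_eq, mem_empty_iff_false, iff_false]
          have hxlt : f i x < c i := mem_iInter.1 (hP ▸ hx) i
          rw [map_add, map_smul, hia]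
          simp
          linarith
        rw [this]; exact finite_empty
      · refine Set.Subsingleton.finite fun t1 h1 t2 h2 => ?_
        simp only [mem_setOf_eq, map_add, map_smul, smul_eq_mul] at h1 h2
        have : t1 * f i α = t2 * f i α := by linarith
        exact mul_right_cancel₀ hia this
    obtain ⟨t, htmem⟩ := ((Set.infinite_coe_iff.1 (Set.Ioo.infinite
      (show T < T + ε by linarith))).diff hBfin).nonempty
    obtain ⟨⟨hTt, htε⟩, htB⟩ := htmem
    refine ⟨x + t • α, ⟨t, le_trans hT0 hTt.le, rfl⟩, ?_⟩
    rw [hE]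
    have hdist : dist (x + t • α) (x + T • α) < ε := by
      rw [dist_eq_norm]
      have : x + t • α - (x + T • α) = (t - T) • α := by
        rw [sub_smul]; abel
      rw [this, norm_smul, hα, mul_one, Real.norm_eq_abs,
        abs_of_nonneg (by linarith)]
      linarith
    refine ⟨⟨hball (mem_ball.2 hdist), fun hc => ?_⟩, fun hc => ?_⟩
    · have : t ∈ S := ⟨le_trans hT0 hTt.le, hc⟩
      exact absurd (le_csSup hSbdd this) (not_le.2 hTt)
    · obtain ⟨i, hi⟩ := mem_iUnion.1 hc
      exact htB (mem_iUnion.2 ⟨i, hi⟩)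
  -- triangle E ⊆ P
  have htP : triangle E ⊆ P := by
    rintro x ⟨hxE, hall⟩
    by_contra hxP
    obtain ⟨α, hα, hmiss⟩ := key x hxE hxP
    obtain ⟨z, hz⟩ := hall α hα
    rw [hmiss] at hz
    exact hz
  -- diamond E ⊆ triangle E
  have hdt : diamond E ⊆ triangle E := by
    rintro x ⟨h1, h2⟩
    exact ⟨h1, fun α hα => (h2 α hα).imp fun z hz =>
      ⟨⟨hz.1.choose, hz.1.choose_spec.2⟩, hz.2⟩⟩
  refine ⟨hEopen, hWC, hWS, ?_, ?_⟩
  · exact le_antisymm (fun x hx => htP (hdt hx)) hPd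
  · exact le_antisymm htP fun x hx => hdt (hPd hx)
end
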